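/- arXiv:1911.09088 — 4 statements merged into one kernel-verified Lean document; each statement's English description precedes it below -/
import Mathlib

section
/- Let α₁,…,α_k be countable ordinals and for each i let x_i, y_i be points of Y^(α_i) = ω₁^(α_i) \ ω₁^(α_i+1), with the x_i pairwise distinct and the y_i pairwise distinct. Then there exists a homeomorphism g of ω₁ with g(x_i) = y_i for all i. In particular, Homeo(ω₁) acts transitively on each Cantor–Bendixson level of ω₁. -/
noncomputable section
open Ordinal Set Topology

/-- The first uncountable ordinal `ω₁`, as a type, endowed with the order topology. -/
def Omega1 : Type 1 := Set.Iio (Ordinal.omega 1)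

instance : LinearOrder Omega1 := inferInstanceAs (LinearOrder (Set.Iio (Ordinal.omega 1)))
instance : TopologicalSpace Omega1 := Preorder.topology Omega1
instance : OrderTopology Omega1 := ⟨rfl⟩

/-- The underlying ordinal of a point of `ω₁`. -/
def Omega1.toOrdinal (x : Omega1) : Ordinal := Subtype.val x

theorem Omega1.toOrdinal_lt (x : Omega1) : x.toOrdinal < Ordinal.omega 1 := Subtype.prop x

/-- Build a point of `ω₁` from a countable ordinal. -/
def Omega1.mk (o : Ordinal) (h : o < Ordinal.omega 1) : Omega1 := Subtype.mk o h

/-- The group structure on the self-homeomorphism group of a topological space. -/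
instance {X : Type*} [TopologicalSpace X] : Group (X ≃ₜ X) where
  mul g h := h.trans g
  one := Homeomorph.refl X
  inv := Homeomorph.symm
  mul_assoc _ _ _ := Homeomorph.ext fun _ => rfl
  one_mul _ := Homeomorph.ext fun _ => rfl
  mul_one _ := Homeomorph.ext fun _ => rfl
  inv_mul_cancel g := Homeomorph.ext fun x => g.symm_apply_apply x

/-- The topology of pointwise convergence on the homeomorphism group of `ω₁`. -/
instance : TopologicalSpace (Omega1 ≃ₜ Omega1) :=
  TopologicalSpace.induced (fun g : Omega1 ≃ₜ Omega1 => (g : Omega1 → Omega1))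
    Pi.topologicalSpace

/-- The set of limit (non-isolated) points of `A`, for the subspace topology on `A`. -/
def limitPoints {X : Type*} [TopologicalSpace X] (A : Set X) : Set X :=
  {x | x ∈ A ∧ ∀ U : Set X, IsOpen U → x ∈ U → ∃ y, y ∈ U ∩ A ∧ y ≠ x}

/-- The `α`-th Cantor–Bendixson derived subset of a topological space `X`:
`X^(0) = X`, `X^(α+1)` is the set of limit points of `X^(α)`, and
`X^(λ) = ⋂_{β<λ} X^(β)` at limit stages. -/
def CBderiv (X : Type*) [TopologicalSpace X] (α : Ordinal) : Set X :=
  Ordinal.limitRecOn α Set.univ (fun _ ih => limitPoints ih)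
    (fun o _ ih => ⋂ (β : Ordinal) (h : β < o), ih β h)

namespace HomeoOmega1

lemma omega1_isLimit : Order.IsSuccLimit (Ordinal.omega 1) := Cardinal.isSuccLimit_omega 1

lemma Omega1.lt_iff {a b : Omega1} : a < b ↔ a.toOrdinal < b.toOrdinal := Iff.rfl
lemma Omega1.le_iff {a b : Omega1} : a ≤ b ↔ a.toOrdinal ≤ b.toOrdinal := Iff.rfl
lemma Omega1.ext {a b : Omega1} (h : a.toOrdinal = b.toOrdinal) : a = b := Subtype.ext h

/-- The successor point in `Omega1`. -/
def osucc (z : Omega1) : Omega1 :=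
  Omega1.mk (z.toOrdinal + 1)
    (by rw [Ordinal.add_one_eq_succ]; exact omega1_isLimit.succ_lt z.toOrdinal_lt)

lemma lt_osucc_iff {a z : Omega1} : a < osucc z ↔ a ≤ z := by
  rw [Omega1.lt_iff, Omega1.le_iff]
  show a.toOrdinal < z.toOrdinal + 1 ↔ _
  rw [Ordinal.add_one_eq_succ, Order.lt_succ_iff]

lemma lt_osucc (z : Omega1) : z < osucc z := lt_osucc_iff.2 le_rfl

lemma Iic_eq_Iio (z : Omega1) : Iic z = Iio (osucc z) := by
  ext w; simp [lt_osucc_iff]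

lemma isOpen_Iic (z : Omega1) : IsOpen (Iic z) := Iic_eq_Iio z ▸ isOpen_Iio

lemma isClosed_Ioi' (p : Omega1) : IsClosed (Ioi p) := by
  rw [← isOpen_compl_iff, compl_Ioi]; exact isOpen_Iic p

lemma isClopen_Ioc (p z : Omega1) : IsClopen (Ioc p z) := by
  constructor
  · rw [← Ioi_inter_Iic]; exact (isClosed_Ioi' p).inter isClosed_Iic
  · rw [← Ioi_inter_Iic, Iic_eq_Iio]; exact isOpen_Ioi.inter isOpen_Iio

lemma Iic_zero {z : Omega1} (hz : z.toOrdinal = 0) : Iic z = {z} := by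
  ext w
  constructor
  · intro hw
    have h1 : w.toOrdinal ≤ z.toOrdinal := Omega1.le_iff.1 hw
    rw [hz] at h1
    have : w.toOrdinal = 0 := le_antisymm h1 zero_le
    exact Omega1.ext (this.trans hz.symm)
  · rintro rfl; exact Set.self_mem_Iic

lemma Ioc_eq_singleton {z p : Omega1} (hz : z.toOrdinal = p.toOrdinal + 1) :
    Ioc p z = {z} := by
  ext w
  simp only [mem_Ioc, mem_singleton_iff]
  constructor
  · rintro ⟨h1, h2⟩
    refine Omega1.ext (le_antisymm (Omega1.le_iff.1 h2) ?_)
    rw [hz, Ordinal.add_one_eq_succ, Order.succ_le_iff]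
    exact Omega1.lt_iff.1 h1
  · rintro rfl
    refine ⟨Omega1.lt_iff.2 ?_, le_rfl⟩
    rw [hz, Ordinal.add_one_eq_succ]
    exact Order.lt_succ _

lemma isClopen_singleton_of_not_limit {z : Omega1} (h : ¬ Order.IsSuccLimit z.toOrdinal) :
    IsClopen ({z} : Set Omega1) := by
  rcases Ordinal.zero_or_succ_or_isSuccLimit z.toOrdinal with h0 | ⟨b, hb⟩ | hl
  · rw [← Iic_zero h0]; exact ⟨isClosed_Iic, isOpen_Iic z⟩
  · have hb' : z.toOrdinal = b + 1 := by rw [← hb, Ordinal.add_one_eq_succ]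
    have hblt : b < Ordinal.omega 1 := lt_trans (by rw [hb']; exact lt_add_of_pos_right b zero_lt_one) z.toOrdinal_lt
    rw [← Ioc_eq_singleton (p := Omega1.mk b hblt) hb']
    exact isClopen_Ioc _ z
  · exact absurd hl h

lemma not_mem_limitPoints_of_not_limit {A : Set Omega1} {z : Omega1}
    (h : ¬ Order.IsSuccLimit z.toOrdinal) : z ∉ limitPoints A := by
  rintro ⟨-, hz⟩
  obtain ⟨y, ⟨hy1, -⟩, hy3⟩ := hz {z} (isClopen_singleton_of_not_limit h).2 rfl
  exact hy3 hy1

/-- the zero point of Omega1 -/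
def zeroPt : Omega1 := Omega1.mk 0 omega1_isLimit.pos

lemma mem_limitPoints_iff_of_limit {A : Set Omega1} {z : Omega1} (hz : Order.IsSuccLimit z.toOrdinal) :
    z ∈ limitPoints A ↔ z ∈ A ∧ ∀ c, c < z → ∃ a ∈ A, c < a ∧ a < z := by
  constructor
  · rintro ⟨hzA, h⟩
    refine ⟨hzA, fun c hc => ?_⟩
    obtain ⟨y, ⟨hyU, hyA⟩, hyne⟩ := h (Ioo c (osucc z)) isOpen_Ioo ⟨hc, lt_osucc z⟩
    exact ⟨y, hyA, hyU.1, lt_of_le_of_ne (lt_osucc_iff.1 hyU.2) hyne⟩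
  · rintro ⟨hzA, h⟩
    refine ⟨hzA, fun U hU hzU => ?_⟩
    have h0 : zeroPt < z := Omega1.lt_iff.2 hz.pos
    obtain ⟨l, u, hzlu, hsub⟩ :=
      (mem_nhds_iff_exists_Ioo_subset' ⟨zeroPt, h0⟩ ⟨osucc z, lt_osucc z⟩).1 (hU.mem_nhds hzU)
    obtain ⟨a, haA, hla, haz⟩ := h l hzlu.1
    exact ⟨a, ⟨hsub ⟨hla, haz.trans hzlu.2⟩, haA⟩, ne_of_lt haz⟩

end HomeoOmega1

namespace HomeoOmega1

/-- Nonzero multiples of `ω ^ β` inside `Omega1`. -/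
def Dset (β : Ordinal) : Set Omega1 := {z | z.toOrdinal ≠ 0 ∧ ω ^ β ∣ z.toOrdinal}

lemma isLimit_of_mem_Dset {β : Ordinal} (hβ : β ≠ 0) {z : Omega1} (hz : z ∈ Dset β) :
    Order.IsSuccLimit z.toOrdinal := by
  obtain ⟨h0, hdvd⟩ := hz
  refine Ordinal.isSuccLimit_iff_omega0_dvd.2 ⟨h0, ?_⟩
  have h1 : (ω : Ordinal) ^ (1 : Ordinal) ∣ ω ^ β :=
    Ordinal.opow_dvd_opow ω (Ordinal.one_le_iff_ne_zero.2 hβ)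
  rw [Ordinal.opow_one] at h1
  exact h1.trans hdvd

lemma limitPoints_Dset (β : Ordinal) : limitPoints (Dset β) = Dset (β + 1) := by
  have hωpos : (0 : Ordinal) < ω ^ β := Ordinal.opow_pos β Ordinal.omega0_pos
  ext z
  by_cases hlim : Order.IsSuccLimit z.toOrdinal
  · rw [mem_limitPoints_iff_of_limit hlim]
    constructor
    · rintro ⟨⟨hz0, γ, hγ⟩, hdens⟩
      refine ⟨hz0, ?_⟩
      have hγ0 : γ ≠ 0 := by rintro rfl; rw [mul_zero] at hγ; exact hz0 hγ
      have hγlim : Order.IsSuccLimit γ := by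
        rcases Ordinal.zero_or_succ_or_isSuccLimit γ with rfl | ⟨γ₀, rfl⟩ | h
        · exact absurd rfl hγ0
        · exfalso
          have hc : ω ^ β * γ₀ < z.toOrdinal := by
            rw [hγ, Ordinal.mul_succ]; exact lt_add_of_pos_right _ hωpos
          obtain ⟨a, ⟨ha0, ρ, hρ⟩, hca, haz⟩ :=
            hdens (Omega1.mk (ω ^ β * γ₀) (hc.trans z.toOrdinal_lt)) (Omega1.lt_iff.2 hc)
          have hca' : ω ^ β * γ₀ < ω ^ β * ρ := by
            have := Omega1.lt_iff.1 hca; rwa [hρ] at this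
          have haz' : ω ^ β * ρ < ω ^ β * Order.succ γ₀ := by
            have := Omega1.lt_iff.1 haz; rwa [hρ, hγ] at this
          have h1 : γ₀ < ρ := (mul_lt_mul_iff_right₀ hωpos).1 hca'
          have h2 : ρ < Order.succ γ₀ := (mul_lt_mul_iff_right₀ hωpos).1 haz'
          exact absurd (Order.succ_le_of_lt h1) (not_le.2 h2)
        · exact h
      obtain ⟨-, δ, hδ⟩ := Ordinal.isSuccLimit_iff_omega0_dvd.1 hγlim
      exact ⟨δ, by rw [hγ, hδ, Ordinal.opow_add, Ordinal.opow_one, mul_assoc]⟩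
    · rintro ⟨hz0, γ, hγ⟩
      have hγ0 : γ ≠ 0 := by rintro rfl; rw [mul_zero] at hγ; exact hz0 hγ
      have hz' : z.toOrdinal = ω ^ β * (ω * γ) := by
        rw [hγ, Ordinal.opow_add, Ordinal.opow_one, mul_assoc]
      have hzD : z ∈ Dset β := ⟨hz0, ⟨ω * γ, hz'⟩⟩
      refine ⟨hzD, fun c hc => ?_⟩
      have hη : Order.IsSuccLimit (ω * γ) :=
        Ordinal.isSuccLimit_mul_left Ordinal.isSuccLimit_omega0 (pos_iff_ne_zero.2 hγ0)
      have hcz : c.toOrdinal < ω ^ β * (ω * γ) := by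
        have := Omega1.lt_iff.1 hc; rwa [hz'] at this
      obtain ⟨ξ, hξη, hcξ⟩ := (Ordinal.lt_mul_iff_of_isSuccLimit hη).1 hcz
      have hsucc : Order.succ ξ < ω * γ := hη.succ_lt hξη
      have haz : ω ^ β * Order.succ ξ < z.toOrdinal := by
        rw [hz']; exact (mul_lt_mul_iff_right₀ hωpos).2 hsucc
      refine ⟨Omega1.mk (ω ^ β * Order.succ ξ) (haz.trans z.toOrdinal_lt),
        ⟨?_, ⟨Order.succ ξ, rfl⟩⟩, ?_, Omega1.lt_iff.2 haz⟩
      · exact _root_.mul_ne_zero (ne_of_gt hωpos) (Ordinal.succ_ne_zero ξ)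
      · refine Omega1.lt_iff.2 (lt_of_lt_of_le hcξ ?_)
        exact mul_le_mul_right (Order.le_succ ξ) _
  · constructor
    · intro h; exact absurd h (not_mem_limitPoints_of_not_limit hlim)
    · intro h
      exact absurd (isLimit_of_mem_Dset (by
        rw [Ordinal.add_one_eq_succ]; exact (Order.succ_ne_bot β)) h) hlim

lemma limitPoints_univ_omega1 : limitPoints (univ : Set Omega1) = Dset 1 := by
  ext z
  by_cases hlim : Order.IsSuccLimit z.toOrdinal
  · rw [mem_limitPoints_iff_of_limit hlim]
    constructor
    · intro _
      refine ⟨hlim.pos.ne', ?_⟩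
      rw [← Ordinal.opow_one ω] at *
      exact (by simpa [Ordinal.opow_one] using (Ordinal.isSuccLimit_iff_omega0_dvd.1 hlim).2)
    · intro _
      refine ⟨trivial, fun c hc => ?_⟩
      refine ⟨osucc c, trivial, lt_osucc c, ?_⟩
      refine Omega1.lt_iff.2 ?_
      show c.toOrdinal + 1 < z.toOrdinal
      rw [Ordinal.add_one_eq_succ]
      exact hlim.succ_lt (Omega1.lt_iff.1 hc)
  · constructor
    · intro h; exact absurd h (not_mem_limitPoints_of_not_limit hlim)
    · intro h; exact absurd (isLimit_of_mem_Dset one_ne_zero h) hlim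

lemma CBderiv_zero (X : Type*) [TopologicalSpace X] : CBderiv X 0 = Set.univ :=
  Ordinal.limitRecOn_zero _ _ _

lemma CBderiv_succ (X : Type*) [TopologicalSpace X] (o : Ordinal) :
    CBderiv X (o + 1) = limitPoints (CBderiv X o) := by
  rw [CBderiv, CBderiv, Ordinal.add_one_eq_succ, Ordinal.limitRecOn_succ]

lemma CBderiv_limit (X : Type*) [TopologicalSpace X] {o : Ordinal} (ho : Order.IsSuccLimit o) :
    CBderiv X o = ⋂ (β : Ordinal) (_ : β < o), CBderiv X β := by
  rw [CBderiv, Ordinal.limitRecOn_limit _ _ _ _ ho]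
  rfl

lemma CBderiv_omega1 : ∀ {β : Ordinal}, β ≠ 0 → CBderiv Omega1 β = Dset β := by
  intro β
  induction β using Ordinal.limitRecOn with
  | zero => intro h; exact absurd rfl h
  | add_one o IH =>
    intro _
    rw [CBderiv_succ]
    rcases eq_or_ne o 0 with rfl | ho
    · rw [CBderiv_zero, limitPoints_univ_omega1, zero_add]
    · rw [IH ho, limitPoints_Dset]
  | limit o ho IH =>
    intro _
    rw [CBderiv_limit _ ho]
    ext z
    simp only [mem_iInter]
    constructor
    · intro h
      have h1 := h 1 (Ordinal.one_lt_of_isSuccLimit ho)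
      rw [IH 1 (Ordinal.one_lt_of_isSuccLimit ho) one_ne_zero] at h1
      refine ⟨h1.1, ?_⟩
      rw [Ordinal.dvd_iff_mod_eq_zero]
      by_contra hr
      have hrlt : z.toOrdinal % ω ^ o < ω ^ o :=
        Ordinal.mod_lt _ (Ordinal.opow_ne_zero o Ordinal.omega0_ne_zero)
      obtain ⟨β, hβo, hrβ⟩ := (Ordinal.lt_opow_of_isSuccLimit Ordinal.omega0_ne_zero ho).1 hrlt
      have hβ0 : β ≠ 0 := by
        rintro rfl
        rw [Ordinal.opow_zero, Ordinal.lt_one_iff_zero] at hrβ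
        exact hr hrβ
      have hβdvd : ω ^ β ∣ z.toOrdinal := by
        have := h β hβo; rw [IH β hβo hβ0] at this; exact this.2
      have hdvd2 : ω ^ β ∣ ω ^ o * (z.toOrdinal / ω ^ o) :=
        (Ordinal.opow_dvd_opow ω hβo.le).mul_right _
      have hdm := Ordinal.div_add_mod z.toOrdinal (ω ^ o)
      have heq : z.toOrdinal - ω ^ o * (z.toOrdinal / ω ^ o) = z.toOrdinal % ω ^ o := by
        nth_rewrite 1 [← hdm]
        rw [Ordinal.add_sub_cancel]
      have hdvdr : ω ^ β ∣ z.toOrdinal % ω ^ o := by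
        obtain ⟨m, hm⟩ := hβdvd
        obtain ⟨n, hn⟩ := hdvd2
        rw [← heq, hn, hm, ← Ordinal.mul_sub]
        exact ⟨_, rfl⟩
      exact absurd (Ordinal.le_of_dvd hr hdvdr) (not_le.2 hrβ)
    · rintro ⟨hz0, hdvd⟩ β hβo
      rcases eq_or_ne β 0 with rfl | hβ0
      · rw [CBderiv_zero]; trivial
      · rw [IH β hβo hβ0]
        exact ⟨hz0, (Ordinal.opow_dvd_opow ω hβo.le).trans hdvd⟩

lemma level_rep {β : Ordinal} {z : Omega1}
    (hz : z ∈ CBderiv Omega1 β \ CBderiv Omega1 (β + 1)) :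
    (z.toOrdinal = 0 ∧ β = 0) ∨ ∃ a, z.toOrdinal = a + ω ^ β := by
  have hβ1 : β + 1 ≠ 0 := by
    rw [Ordinal.add_one_eq_succ]; exact (Order.succ_ne_bot β)
  have hz2 : z ∉ Dset (β + 1) := by rw [← CBderiv_omega1 hβ1]; exact hz.2
  rcases eq_or_ne β 0 with rfl | hβ
  · rcases Ordinal.zero_or_succ_or_isSuccLimit z.toOrdinal with h0 | ⟨b, hb⟩ | hlim
    · exact Or.inl ⟨h0, rfl⟩
    · refine Or.inr ⟨b, ?_⟩
      rw [← hb, Ordinal.opow_zero, Ordinal.add_one_eq_succ]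
    · exfalso
      apply hz2
      refine ⟨hlim.pos.ne', ?_⟩
      rw [zero_add, Ordinal.opow_one]
      exact (Ordinal.isSuccLimit_iff_omega0_dvd.1 hlim).2
  · have hz1 : z ∈ Dset β := by rw [← CBderiv_omega1 hβ]; exact hz.1
    obtain ⟨hz0, γ, hγ⟩ := hz1
    have hγ0 : γ ≠ 0 := by rintro rfl; rw [mul_zero] at hγ; exact hz0 hγ
    rcases Ordinal.zero_or_succ_or_isSuccLimit γ with rfl | ⟨γ₀, hγ₀⟩ | hγlim
    · exact absurd rfl hγ0
    · refine Or.inr ⟨ω ^ β * γ₀, ?_⟩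
      rw [hγ, ← hγ₀, Ordinal.mul_succ]
    · exfalso
      apply hz2
      obtain ⟨-, δ, hδ⟩ := Ordinal.isSuccLimit_iff_omega0_dvd.1 hγlim
      exact ⟨hz0, δ, by rw [hγ, hδ, Ordinal.opow_add, Ordinal.opow_one, mul_assoc]⟩

end HomeoOmega1

namespace HomeoOmega1

lemma sub_le_sub_iff_ord {p a b : Ordinal} (ha : p ≤ a) (hb : p ≤ b) :
    a - p ≤ b - p ↔ a ≤ b := by
  constructor
  · intro h
    calc a = p + (a - p) := (Ordinal.add_sub_cancel_of_le ha).symm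
      _ ≤ p + (b - p) := add_le_add_right h p
      _ = b := Ordinal.add_sub_cancel_of_le hb
  · intro h
    exact Ordinal.sub_le.2 (by rwa [Ordinal.add_sub_cancel_of_le hb])

/-- The translation order isomorphism between `Ioc p (p+δ)` and `Ioc q (q+δ)` in `Omega1`. -/
def shiftIso {p u q v : Omega1} {δ : Ordinal} (hu : u.toOrdinal = p.toOrdinal + δ)
    (hv : v.toOrdinal = q.toOrdinal + δ) : (Set.Ioc p u) ≃o (Set.Ioc q v) where
  toFun z := ⟨Omega1.mk (q.toOrdinal + (z.1.toOrdinal - p.toOrdinal))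
      (by
        have hle : z.1.toOrdinal - p.toOrdinal ≤ δ :=
          Ordinal.sub_le.2 (by rw [← hu]; exact Omega1.le_iff.1 z.2.2)
        refine lt_of_le_of_lt ?_ v.toOrdinal_lt
        rw [hv]; exact add_le_add_right hle _),
     by
      constructor
      · refine Omega1.lt_iff.2 ?_
        show q.toOrdinal < q.toOrdinal + (z.1.toOrdinal - p.toOrdinal)
        refine lt_add_of_pos_right _ ?_
        exact Ordinal.lt_sub.2 (by rw [add_zero]; exact Omega1.lt_iff.1 z.2.1)
      · refine Omega1.le_iff.2 ?_
        show q.toOrdinal + (z.1.toOrdinal - p.toOrdinal) ≤ v.toOrdinal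
        have hle : z.1.toOrdinal - p.toOrdinal ≤ δ :=
          Ordinal.sub_le.2 (by rw [← hu]; exact Omega1.le_iff.1 z.2.2)
        rw [hv]; exact add_le_add_right hle _⟩
  invFun z := ⟨Omega1.mk (p.toOrdinal + (z.1.toOrdinal - q.toOrdinal))
      (by
        have hle : z.1.toOrdinal - q.toOrdinal ≤ δ :=
          Ordinal.sub_le.2 (by rw [← hv]; exact Omega1.le_iff.1 z.2.2)
        refine lt_of_le_of_lt ?_ u.toOrdinal_lt
        rw [hu]; exact add_le_add_right hle _),
     by
      constructor
      · refine Omega1.lt_iff.2 ?_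
        show p.toOrdinal < p.toOrdinal + (z.1.toOrdinal - q.toOrdinal)
        refine lt_add_of_pos_right _ ?_
        exact Ordinal.lt_sub.2 (by rw [add_zero]; exact Omega1.lt_iff.1 z.2.1)
      · refine Omega1.le_iff.2 ?_
        show p.toOrdinal + (z.1.toOrdinal - q.toOrdinal) ≤ u.toOrdinal
        have hle : z.1.toOrdinal - q.toOrdinal ≤ δ :=
          Ordinal.sub_le.2 (by rw [← hv]; exact Omega1.le_iff.1 z.2.2)
        rw [hu]; exact add_le_add_right hle _⟩
  left_inv z := by
    apply Subtype.ext
    apply Omega1.ext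
    show p.toOrdinal + ((q.toOrdinal + (z.1.toOrdinal - p.toOrdinal)) - q.toOrdinal)
        = z.1.toOrdinal
    rw [Ordinal.add_sub_cancel, Ordinal.add_sub_cancel_of_le (Omega1.le_iff.1 z.2.1.le)]
  right_inv z := by
    apply Subtype.ext
    apply Omega1.ext
    show q.toOrdinal + ((p.toOrdinal + (z.1.toOrdinal - q.toOrdinal)) - p.toOrdinal)
        = z.1.toOrdinal
    rw [Ordinal.add_sub_cancel, Ordinal.add_sub_cancel_of_le (Omega1.le_iff.1 z.2.1.le)]
  map_rel_iff' := by
    intro a b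
    show (⟨_, _⟩ : Set.Ioc q v) ≤ ⟨_, _⟩ ↔ a ≤ b
    rw [Subtype.mk_le_mk]
    show q.toOrdinal + (a.1.toOrdinal - p.toOrdinal) ≤ q.toOrdinal + (b.1.toOrdinal - p.toOrdinal) ↔ _
    constructor
    · intro h
      have h2 := (add_le_add_iff_left q.toOrdinal).1 h
      have h3 := (sub_le_sub_iff_ord (Omega1.le_iff.1 a.2.1.le) (Omega1.le_iff.1 b.2.1.le)).1 h2
      exact Subtype.coe_le_coe.1 (Omega1.le_iff.2 h3)
    · intro h
      refine add_le_add_right ?_ q.toOrdinal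
      exact (sub_le_sub_iff_ord (Omega1.le_iff.1 a.2.1.le) (Omega1.le_iff.1 b.2.1.le)).2
        (Omega1.le_iff.1 (Subtype.coe_le_coe.2 h))

lemma shiftIso_apply_toOrdinal {p u q v : Omega1} {δ : Ordinal}
    (hu : u.toOrdinal = p.toOrdinal + δ) (hv : v.toOrdinal = q.toOrdinal + δ)
    (z : Set.Ioc p u) :
    ((shiftIso hu hv z : Set.Ioc q v) : Omega1).toOrdinal
      = q.toOrdinal + (z.1.toOrdinal - p.toOrdinal) := rfl

/-- Gluing a homeomorphism between two disjoint clopen sets to a self-homeomorphism. -/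
lemma glue {X : Type*} [TopologicalSpace X] {U V : Set X} (hU : IsClopen U) (hV : IsClopen V)
    (hUV : Disjoint U V) (e : U ≃ₜ V) :
    ∃ s : X ≃ₜ X, (∀ z : X, ∀ hz : z ∈ U, s z = (e ⟨z, hz⟩ : X)) ∧
      (∀ z : X, z ∉ U → z ∉ V → s z = z) := by
  classical
  set f : X → X := fun z =>
    if h : z ∈ U then (e ⟨z, h⟩ : X) else if h : z ∈ V then (e.symm ⟨z, h⟩ : X) else z with hf
  have hfU : ∀ z (hz : z ∈ U), f z = e ⟨z, hz⟩ := fun z hz => dif_pos hz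
  have hfV : ∀ z (hz : z ∈ V), f z = e.symm ⟨z, hz⟩ := fun z hz => by
    show (if h : z ∈ U then (e ⟨z, h⟩ : X) else if h : z ∈ V then (e.symm ⟨z, h⟩ : X) else z) = _
    rw [dif_neg (fun h => (Set.disjoint_left.1 hUV h) hz), dif_pos hz]
  have hfO : ∀ z, z ∉ U → z ∉ V → f z = z := fun z h1 h2 => by
    show (if h : z ∈ U then (e ⟨z, h⟩ : X) else if h : z ∈ V then (e.symm ⟨z, h⟩ : X) else z) = _
    rw [dif_neg h1, dif_neg h2]
  have hinv : Function.Involutive f := by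
    intro z
    by_cases h1 : z ∈ U
    · rw [hfU z h1]
      have hV' : ((e ⟨z, h1⟩ : X)) ∈ V := (e ⟨z, h1⟩).2
      rw [hfV _ hV', Subtype.coe_eta, e.symm_apply_apply]
    · by_cases h2 : z ∈ V
      · rw [hfV z h2]
        have hU' : ((e.symm ⟨z, h2⟩ : X)) ∈ U := (e.symm ⟨z, h2⟩).2
        rw [hfU _ hU', Subtype.coe_eta, e.apply_symm_apply]
      · rw [hfO z h1 h2, hfO z h1 h2]
  have hcont : Continuous f := by
    rw [continuous_iff_continuousAt]
    intro z
    by_cases h1 : z ∈ U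
    · refine ContinuousOn.continuousAt ?_ (hU.2.mem_nhds h1)
      rw [continuousOn_iff_continuous_restrict]
      have hres : U.domRestrict f = fun w : U => (e w : X) := funext fun w => by
        show f w.1 = _
        rw [hfU w.1 w.2, Subtype.coe_eta]
      rw [hres]
      exact continuous_subtype_val.comp e.continuous
    · by_cases h2 : z ∈ V
      · refine ContinuousOn.continuousAt ?_ (hV.2.mem_nhds h2)
        rw [continuousOn_iff_continuous_restrict]
        have hres : V.domRestrict f = fun w : V => (e.symm w : X) := funext fun w => by
          show f w.1 = _
          rw [hfV w.1 w.2, Subtype.coe_eta]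
        rw [hres]
        exact continuous_subtype_val.comp e.symm.continuous
      · refine ContinuousOn.continuousAt ?_
          (((hU.1.union hV.1).isOpen_compl).mem_nhds (by simp [h1, h2]))
        refine ContinuousOn.congr continuousOn_id ?_
        intro w hw
        simp only [mem_compl_iff, mem_union, not_or] at hw
        exact hfO w hw.1 hw.2
  exact ⟨⟨hinv.toPerm f, hcont, hcont⟩, hfU, hfO⟩

/-- Homeomorphism between any two singleton subspaces. -/
def singHomeo {X : Type*} [TopologicalSpace X] (a b : X) :
    ({a} : Set X) ≃ₜ ({b} : Set X) where
  toFun _ := ⟨b, rfl⟩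
  invFun _ := ⟨a, rfl⟩
  left_inv z := Subtype.ext (mem_singleton_iff.1 z.2).symm
  right_inv z := Subtype.ext (mem_singleton_iff.1 z.2).symm
  continuous_toFun := continuous_const
  continuous_invFun := continuous_const

lemma limitPoints_homeo {X Y : Type*} [TopologicalSpace X] [TopologicalSpace Y]
    (φ : X ≃ₜ Y) (A : Set X) (z : X) :
    z ∈ limitPoints A ↔ φ z ∈ limitPoints (φ '' A) := by
  constructor
  · rintro ⟨hzA, h⟩
    refine ⟨mem_image_of_mem φ hzA, fun U hU hzU => ?_⟩
    obtain ⟨y, ⟨hyU, hyA⟩, hyne⟩ := h (φ ⁻¹' U) (hU.preimage φ.continuous) hzU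
    exact ⟨φ y, ⟨hyU, mem_image_of_mem φ hyA⟩, fun hc => hyne (φ.injective hc)⟩
  · rintro ⟨hzA, h⟩
    obtain ⟨z', hz', hz'eq⟩ := hzA
    have hzA' : z ∈ A := by rw [← φ.injective hz'eq]; exact hz'
    refine ⟨hzA', fun U hU hzU => ?_⟩
    obtain ⟨y', ⟨hyU, hyA⟩, hyne⟩ :=
      h (φ '' U) (φ.isOpen_image.2 hU) (mem_image_of_mem φ hzU)
    obtain ⟨y, hyU', rfl⟩ := hyU
    obtain ⟨y₂, hy₂A, hy₂eq⟩ := hyA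
    refine ⟨y, ⟨hyU', ?_⟩, fun hc => hyne (by rw [hc])⟩
    rw [← φ.injective hy₂eq]; exact hy₂A

lemma CBderiv_homeo_iff {X Y : Type*} [TopologicalSpace X] [TopologicalSpace Y]
    (φ : X ≃ₜ Y) : ∀ (β : Ordinal) (z : X), z ∈ CBderiv X β ↔ φ z ∈ CBderiv Y β := by
  intro β
  induction β using Ordinal.limitRecOn with
  | zero => intro z; rw [CBderiv_zero, CBderiv_zero]; simp
  | add_one o IH =>
    have himg : CBderiv Y o = φ '' CBderiv X o := by
      ext w
      constructor
      · intro hw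
        exact ⟨φ.symm w, (IH _).2 (by rwa [φ.apply_symm_apply]), φ.apply_symm_apply w⟩
      · rintro ⟨z, hz, rfl⟩
        exact (IH z).1 hz
    intro z
    rw [CBderiv_succ, CBderiv_succ, himg]
    exact limitPoints_homeo φ _ z
  | limit o ho IH =>
    intro z
    rw [CBderiv_limit _ ho, CBderiv_limit _ ho]
    simp only [mem_iInter]
    exact ⟨fun h β hβ => (IH β hβ z).1 (h β hβ), fun h β hβ => (IH β hβ z).2 (h β hβ)⟩

end HomeoOmega1

namespace HomeoOmega1

lemma exists_base {β : Ordinal} {z : Omega1} {a : Ordinal} (hz : z.toOrdinal = a + ω ^ β)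
    (G : Set Omega1) (hG : G.Finite) :
    ∃ p : Omega1, p < z ∧ z.toOrdinal = p.toOrdinal + ω ^ β ∧
      ∀ w ∈ G, w < z → w ≤ p := by
  classical
  have hωpos : (0 : Ordinal) < ω ^ β := Ordinal.opow_pos β Ordinal.omega0_pos
  set T : Finset Ordinal :=
    insert a ((hG.toFinset.filter (fun w => w < z)).image Omega1.toOrdinal) with hT
  have hne : T.Nonempty := ⟨a, Finset.mem_insert_self _ _⟩
  have hlt : ∀ t ∈ T, t < z.toOrdinal := by
    intro t ht
    rcases Finset.mem_insert.1 ht with rfl | ht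
    · rw [hz]; exact lt_add_of_pos_right _ hωpos
    · obtain ⟨w, hw, rfl⟩ := Finset.mem_image.1 ht
      exact Omega1.lt_iff.1 (Finset.mem_filter.1 hw).2
  have hplt : T.max' hne < z.toOrdinal := hlt _ (T.max'_mem hne)
  have ha_le : a ≤ T.max' hne := Finset.le_max' T a (Finset.mem_insert_self _ _)
  refine ⟨Omega1.mk (T.max' hne) (hplt.trans z.toOrdinal_lt), Omega1.lt_iff.2 hplt, ?_, ?_⟩
  · show z.toOrdinal = T.max' hne + ω ^ β
    have h1 : T.max' hne - a < ω ^ β := Ordinal.sub_lt_of_lt_add (by rwa [← hz]) hωpos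
    calc z.toOrdinal = a + ω ^ β := hz
      _ = a + ((T.max' hne - a) + ω ^ β) := by rw [Ordinal.add_absorp h1 le_rfl]
      _ = (a + (T.max' hne - a)) + ω ^ β := (add_assoc _ _ _).symm
      _ = T.max' hne + ω ^ β := by rw [Ordinal.add_sub_cancel_of_le ha_le]
  · intro w hw hwz
    refine Omega1.le_iff.2 (Finset.le_max' T _ ?_)
    exact Finset.mem_insert_of_mem
      (Finset.mem_image.2 ⟨w, Finset.mem_filter.2 ⟨hG.mem_toFinset.2 hw, hwz⟩, rfl⟩)

lemma swap_exists {β : Ordinal.{0}} {u v : Omega1} (huv : u ≠ v)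
    (hu : u ∈ CBderiv Omega1 β \ CBderiv Omega1 (β + 1))
    (hv : v ∈ CBderiv Omega1 β \ CBderiv Omega1 (β + 1))
    (F : Set Omega1) (hF : F.Finite) :
    ∃ s : Omega1 ≃ₜ Omega1, s u = v ∧ ∀ w ∈ F, w ≠ u → w ≠ v → s w = w := by
  classical
  rcases eq_or_ne β 0 with rfl | hβ
  · have key : ∀ w : Omega1, w ∈ CBderiv Omega1 (0:Ordinal) \ CBderiv Omega1 ((0:Ordinal) + 1) →
        ¬ Order.IsSuccLimit w.toOrdinal := by
      intro w hw hl
      apply hw.2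
      have hmem : w ∈ Dset ((0:Ordinal) + 1) := by
        rw [zero_add]
        exact ⟨hl.pos.ne', by rw [Ordinal.opow_one]; exact (Ordinal.isSuccLimit_iff_omega0_dvd.1 hl).2⟩
      rwa [← CBderiv_omega1 (by rw [zero_add]; exact one_ne_zero)] at hmem
    obtain ⟨s, hs1, hs2⟩ := glue (isClopen_singleton_of_not_limit (key u hu))
      (isClopen_singleton_of_not_limit (key v hv))
      (by rwa [Set.disjoint_singleton]) (singHomeo u v)
    refine ⟨s, ?_, ?_⟩
    · rw [hs1 u rfl]; rfl
    · intro w hw hwu hwv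
      exact hs2 w (fun h => hwu h) (fun h => hwv h)
  · obtain (⟨-, hβ0⟩ | ⟨a, ha⟩) := level_rep hu
    · exact absurd hβ0 hβ
    obtain (⟨-, hβ0⟩ | ⟨b, hb⟩) := level_rep hv
    · exact absurd hβ0 hβ
    set G : Set Omega1 := insert u (insert v F) with hG
    have hGfin : G.Finite := (hF.insert v).insert u
    obtain ⟨p, hpu, hup, hpmax⟩ := exists_base ha G hGfin
    obtain ⟨q, hqv, hvq, hqmax⟩ := exists_base hb G hGfin
    have hUV : Disjoint (Set.Ioc p u) (Set.Ioc q v) := by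
      rcases huv.lt_or_gt with h | h
      · have huq : u ≤ q := hqmax u (by simp [hG]) h
        rw [Set.disjoint_left]
        rintro w ⟨-, hw2⟩ ⟨hw3, -⟩
        exact lt_irrefl w (lt_of_le_of_lt (hw2.trans huq) hw3)
      · have hvp : v ≤ p := hpmax v (by simp [hG]) h
        rw [Set.disjoint_left]
        rintro w ⟨hw1, -⟩ ⟨-, hw4⟩
        exact lt_irrefl w (lt_of_le_of_lt (hw4.trans hvp) hw1)
    obtain ⟨s, hs1, hs2⟩ :=
      glue (isClopen_Ioc p u) (isClopen_Ioc q v) hUV (shiftIso hup hvq).toHomeomorph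
    refine ⟨s, ?_, ?_⟩
    · have hmem : u ∈ Set.Ioc p u := ⟨hpu, le_rfl⟩
      rw [hs1 u hmem]
      apply Omega1.ext
      have h2 : (((shiftIso hup hvq).toHomeomorph ⟨u, hmem⟩ : Set.Ioc q v) : Omega1).toOrdinal
          = q.toOrdinal + (u.toOrdinal - p.toOrdinal) := rfl
      rw [h2, hup, Ordinal.add_sub_cancel, ← hvq]
    · intro w hw hwu hwv
      refine hs2 w ?_ ?_
      · rintro ⟨hw1, hw2⟩
        have hle : w ≤ p := hpmax w (by simp [hG, hw]) (lt_of_le_of_ne hw2 hwu)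
        exact absurd hw1 (not_lt.2 hle)
      · rintro ⟨hw1, hw2⟩
        have hle : w ≤ q := hqmax w (by simp [hG, hw]) (lt_of_le_of_ne hw2 hwv)
        exact absurd hw1 (not_lt.2 hle)

end HomeoOmega1

namespace HomeoOmega1

lemma CBderiv_succ' (X : Type*) [TopologicalSpace X] (o : Ordinal) :
    CBderiv X (Order.succ o) = limitPoints (CBderiv X o) := by
  rw [← Ordinal.add_one_eq_succ, CBderiv_succ]

universe uu vv

lemma CBderiv_lift {X : Type*} [TopologicalSpace X] :
    ∀ β : Ordinal.{vv}, CBderiv X (Ordinal.lift.{uu, vv} β) = CBderiv X β := by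
  intro β
  induction β using Ordinal.limitRecOn with
  | zero => rw [Ordinal.lift_zero, CBderiv_zero, CBderiv_zero]
  | add_one o IH => rw [Ordinal.lift_add, Ordinal.lift_one, CBderiv_succ, CBderiv_succ, IH]
  | limit o ho IH =>
    rw [CBderiv_limit _ ho, CBderiv_limit _ (Ordinal.isSuccLimit_lift.2 ho)]
    ext z
    simp only [mem_iInter]
    constructor
    · intro h β' hβ'
      have := h (Ordinal.lift.{uu} β') (Ordinal.lift_lt.2 hβ')
      rwa [IH β' hβ'] at this
    · intro h γ hγ
      obtain ⟨β', hβ', rfl⟩ := Ordinal.lt_lift_iff.1 hγ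
      rw [IH β' hβ']
      exact h β' hβ'

theorem main_aux (k : ℕ) (α : Fin k → Ordinal.{0}) (x y : Fin k → Omega1)
    (hx : ∀ i, x i ∈ CBderiv Omega1 (α i) \ CBderiv Omega1 (α i + 1))
    (hy : ∀ i, y i ∈ CBderiv Omega1 (α i) \ CBderiv Omega1 (α i + 1))
    (hxinj : Function.Injective x) (hyinj : Function.Injective y) :
    ∃ g : Omega1 ≃ₜ Omega1, ∀ i, g (x i) = y i := by
  induction k with
  | zero => exact ⟨Homeomorph.refl _, fun i => i.elim0⟩
  | succ n IH =>
    obtain ⟨g₀, hg₀⟩ := IH (α ∘ Fin.castSucc) (x ∘ Fin.castSucc)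
      (y ∘ Fin.castSucc) (fun i => hx _) (fun i => hy _)
      (hxinj.comp (Fin.castSucc_injective n)) (hyinj.comp (Fin.castSucc_injective n))
    have hu : g₀ (x (Fin.last n)) ∈ CBderiv Omega1 (α (Fin.last n))
        \ CBderiv Omega1 (α (Fin.last n) + 1) :=
      ⟨(CBderiv_homeo_iff g₀ _ _).1 (hx _).1,
       fun hc => (hx (Fin.last n)).2 ((CBderiv_homeo_iff g₀ _ _).2 hc)⟩
    by_cases hcase : g₀ (x (Fin.last n)) = y (Fin.last n)
    · refine ⟨g₀, fun i => ?_⟩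
      refine Fin.lastCases ?_ (fun j => ?_) i
      · exact hcase
      · exact hg₀ j
    · obtain ⟨s, hs1, hs2⟩ := swap_exists hcase hu (hy (Fin.last n))
        (Set.range (fun j : Fin n => y j.castSucc)) (Set.finite_range _)
      refine ⟨g₀.trans s, fun i => ?_⟩
      refine Fin.lastCases ?_ (fun j => ?_) i
      · rw [Homeomorph.trans_apply]; exact hs1
      · rw [Homeomorph.trans_apply]
        have h1 : g₀ (x j.castSucc) = y j.castSucc := hg₀ j
        rw [h1]
        refine hs2 _ ⟨j, rfl⟩ ?_ ?_
        · intro hc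
          have h2 : g₀ (x j.castSucc) = g₀ (x (Fin.last n)) := by rw [h1, hc]
          exact absurd (hxinj (g₀.injective h2)) (Fin.castSucc_lt_last j).ne
        · intro hc
          exact absurd (hyinj hc) (Fin.castSucc_lt_last j).ne

end HomeoOmega1


/-- Given points `x i`, `y i` of the Cantor–Bendixson levels
`ω₁^(α i) \ ω₁^(α i + 1)` of `ω₁`, with the `x i` pairwise distinct and the
`y i` pairwise distinct, there is a homeomorphism of `ω₁` sending each `x i`
to `y i`. In particular `Homeo(ω₁)` acts transitively on each level. -/
theorem homeoOmega1_transitive_on_levels (k : ℕ) (α : Fin k → Ordinal)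
    (hα : ∀ i, α i < Ordinal.omega 1) (x y : Fin k → Omega1)
    (hx : ∀ i, x i ∈ CBderiv Omega1 (α i) \ CBderiv Omega1 (α i + 1))
    (hy : ∀ i, y i ∈ CBderiv Omega1 (α i) \ CBderiv Omega1 (α i + 1))
    (hxinj : Function.Injective x) (hyinj : Function.Injective y) :
    ∃ g : Omega1 ≃ₜ Omega1, ∀ i, g (x i) = y i := by
  have h : ∀ i, ∃ β : Ordinal.{0}, CBderiv Omega1 (α i) = CBderiv Omega1 β ∧
      CBderiv Omega1 (α i + 1) = CBderiv Omega1 (β + 1) := by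
    intro i
    have hlt : α i < Ordinal.lift.{_, 0} (Ordinal.omega 1) := by
      rw [Ordinal.lift_omega, Ordinal.lift_one]
      exact hα i
    obtain ⟨β, hβlt, hβeq⟩ := Ordinal.lt_lift_iff.1 hlt
    refine ⟨β, by rw [← hβeq, HomeoOmega1.CBderiv_lift], ?_⟩
    have : α i + 1 = Ordinal.lift.{_, 0} (β + 1) := by
      rw [Ordinal.lift_add, Ordinal.lift_one, hβeq]
    rw [this, HomeoOmega1.CBderiv_lift]
  choose β hβ1 hβ2 using h
  refine HomeoOmega1.main_aux k β x y (fun i => ?_) (fun i => ?_) hxinj hyinj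
  · have := hx i; rwa [hβ1 i, hβ2 i] at this
  · have := hy i; rwa [hβ1 i, hβ2 i] at this
end
end

section
/- The closure of Homeo(ω₁) inside Sym(ω₁) (with the topology of pointwise convergence) equals the direct product over countable ordinals β of the full symmetric groups of the Cantor–Bendixson levels Y^(β) = ω₁^(β) \ ω₁^(β+1); in particular each factor is isomorphic to Sym(ℵ₁). -/
noncomputable section
open Ordinal Set Topology

/-- The topology of pointwise convergence on the symmetric group of the
underlying set of `ω₁` (`ω₁` taken discrete). -/
instance : TopologicalSpace (Equiv.Perm Omega1) :=
  TopologicalSpace.induced (fun σ : Equiv.Perm Omega1 => (σ : Omega1 → Omega1))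
    (@Pi.topologicalSpace Omega1 (fun _ => Omega1) (fun _ => ⊥))

/-! ### Auxiliary: ordinal arithmetic below `ω₁` -/

section OrdAux
open Ordinal Cardinal

theorem lt_omega1_iff_card {o : Ordinal} : o < ω_ 1 ↔ o.card < ℵ_ 1 := by
  rw [← Cardinal.ord_aleph 1, Cardinal.lt_ord]

theorem add_lt_omega1' {a b : Ordinal} (ha : a < ω_ 1) (hb : b < ω_ 1) : a + b < ω_ 1 := by
  rw [lt_omega1_iff_card] at *
  rw [Ordinal.card_add]
  exact Cardinal.add_lt_of_lt (aleph0_le_aleph 1) ha hb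

theorem mul_lt_omega1' {a b : Ordinal} (ha : a < ω_ 1) (hb : b < ω_ 1) : a * b < ω_ 1 := by
  rw [lt_omega1_iff_card] at *
  rw [Ordinal.card_mul]
  exact Cardinal.mul_lt_of_lt (aleph0_le_aleph 1) ha hb

theorem one_lt_omega1' : 1 < ω_ 1 := one_lt_omega0.trans omega0_lt_omega_one

theorem opow_lt_omega1' : ∀ {b : Ordinal}, b < ω_ 1 → ω ^ b < ω_ 1 := by
  intro b
  induction b using Ordinal.limitRecOn with
  | zero => intro _; rw [opow_zero]; exact one_lt_omega1'
  | add_one o ih =>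
      intro h
      rw [opow_add_one]
      exact mul_lt_omega1' (ih ((lt_add_one o).trans h))
        (omega0_lt_omega_one)
  | limit o ho ih =>
      intro h
      have h1 : ω ^ o = Ordinal.bsup o fun a _ => ω ^ a :=
        (Ordinal.IsNormal.bsup_eq (Ordinal.isNormal_opow one_lt_omega0) ho).symm
      rw [h1, ← Cardinal.ord_aleph 1]
      refine Cardinal.bsup_lt_ord_of_isRegular isRegular_aleph_one ?_ ?_
      · exact lt_omega1_iff_card.mp h
      · intro i hi
        rw [Cardinal.ord_aleph]
        exact ih i hi (hi.trans h)

/-- Divisibility by all smaller `ω`-powers at a limit gives divisibility. -/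
theorem opow_dvd_of_forall_lt {o x : Ordinal} (ho : Order.IsSuccLimit o)
    (h : ∀ β < o, ω ^ β ∣ x) : ω ^ o ∣ x := by
  rcases eq_or_ne x 0 with rfl | hx0
  · exact dvd_zero _
  have hdm : ω ^ o * (x / ω ^ o) + x % ω ^ o = x := Ordinal.div_add_mod x (ω ^ o)
  have hr : x % ω ^ o < ω ^ o := Ordinal.mod_lt x (opow_ne_zero o omega0_ne_zero)
  have hr0 : x % ω ^ o = 0 := by
    by_contra h0
    obtain ⟨β, hβo, hrβ⟩ : ∃ β < o, x % ω ^ o < ω ^ β := by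
      rwa [Ordinal.lt_opow_of_isSuccLimit omega0_ne_zero ho] at hr
    have h1 : ω ^ β ∣ ω ^ o * (x / ω ^ o) :=
      dvd_mul_of_dvd_left (opow_dvd_opow _ hβo.le) _
    have h2 : ω ^ β ∣ x % ω ^ o := (Ordinal.dvd_add_iff h1).mp (by rw [hdm]; exact h β hβo)
    exact (Ordinal.le_of_dvd h0 h2).not_gt hrβ
  rw [hr0, add_zero] at hdm
  exact ⟨x / ω ^ o, hdm.symm⟩

end OrdAux
/-! ### Basic API for `Omega1` -/

namespace Omega1
open Ordinal Set

theorem lt_iff {x y : Omega1} : x < y ↔ x.toOrdinal < y.toOrdinal := Subtype.coe_lt_coe.symm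

theorem le_iff {x y : Omega1} : x ≤ y ↔ x.toOrdinal ≤ y.toOrdinal := Subtype.coe_le_coe.symm

theorem toOrdinal_injective : Function.Injective Omega1.toOrdinal := fun _ _ h => Subtype.ext h

theorem eq_iff {x y : Omega1} : x = y ↔ x.toOrdinal = y.toOrdinal :=
  ⟨fun h => h ▸ rfl, fun h => toOrdinal_injective h⟩

@[simp] theorem mk_toOrdinal {o : Ordinal} (h : o < ω_ 1) : (Omega1.mk o h).toOrdinal = o := rfl

/-- The successor inside `Omega1`. -/
def succ (x : Omega1) : Omega1 :=
  Omega1.mk (x.toOrdinal + 1) (by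
    rw [Ordinal.add_one_eq_succ]
    exact (Cardinal.isSuccLimit_omega 1).succ_lt x.toOrdinal_lt)

theorem lt_succ_iff {x y : Omega1} : x < succ y ↔ x ≤ y := by
  rw [lt_iff, le_iff, succ, mk_toOrdinal, Ordinal.add_one_eq_succ, Order.lt_succ_iff]

theorem Iic_eq_Iio_succ (b : Omega1) : Iic b = Iio (succ b) := by
  ext z; simp [lt_succ_iff]

theorem Ioc_eq_Ioo_succ (a b : Omega1) : Ioc a b = Ioo a (succ b) := by
  ext z; simp [lt_succ_iff, and_comm]

theorem isOpen_Iic (b : Omega1) : IsOpen (Iic b) := by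
  rw [Iic_eq_Iio_succ]; exact isOpen_Iio

theorem isOpen_Ioc' (a b : Omega1) : IsOpen (Ioc a b) := by
  rw [Ioc_eq_Ioo_succ]; exact isOpen_Ioo

theorem isClosed_Ioc' (a b : Omega1) : IsClosed (Ioc a b) := by
  have h : Ioc a b = Icc (succ a) b := by
    ext z
    simp only [mem_Ioc, mem_Icc, and_congr_left_iff]
    intro _
    rw [lt_iff, le_iff, succ, mk_toOrdinal, Ordinal.add_one_eq_succ, Order.succ_le_iff]
  rw [h]
  exact isClosed_Icc

theorem nhds_Ioc {x : Omega1} {U : Set Omega1} (hU : U ∈ nhds x) {l : Omega1} (hl : l < x) :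
    ∃ c, l ≤ c ∧ c < x ∧ Ioc c x ⊆ U := by
  obtain ⟨c, hc, hsub⟩ := exists_Ioc_subset_of_mem_nhds' hU hl
  exact ⟨c, hc.1, hc.2, hsub⟩

end Omega1
/-! ### Computation of the Cantor–Bendixson derivatives of `Omega1` -/

open Ordinal Set

/-- Explicit description of the Cantor–Bendixson derivatives of `Omega1`. -/
def DSet (β : Ordinal) : Set Omega1 :=
  {x | ω ^ β ∣ x.toOrdinal ∧ (β = 0 ∨ x.toOrdinal ≠ 0)}

theorem DSet_zero : DSet 0 = Set.univ := by
  ext x; simp [DSet]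

theorem DSet_anti {β γ : Ordinal} (h : β ≤ γ) : DSet γ ⊆ DSet β := by
  rintro x ⟨h1, h2⟩
  refine ⟨dvd_trans (opow_dvd_opow _ h) h1, ?_⟩
  rcases h2 with rfl | h2
  · exact Or.inl (le_antisymm (by simpa using h) zero_le)
  · exact Or.inr h2

theorem zeroMk_lt {x : Omega1} (hx : x.toOrdinal ≠ 0) : Omega1.mk 0 (omega_pos 1) < x := by
  rw [Omega1.lt_iff]; exact pos_iff_ne_zero.mpr hx

theorem CBderiv_zero (X : Type*) [TopologicalSpace X] : CBderiv X 0 = Set.univ :=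
  Ordinal.limitRecOn_zero _ _ _

theorem CBderiv_succ (X : Type*) [TopologicalSpace X] (β : Ordinal) :
    CBderiv X (β + 1) = limitPoints (CBderiv X β) := by
  rw [Ordinal.add_one_eq_succ]
  exact Ordinal.limitRecOn_succ _ _ _ _

theorem CBderiv_limit (X : Type*) [TopologicalSpace X] {o : Ordinal} (ho : Order.IsSuccLimit o) :
    CBderiv X o = ⋂ (β : Ordinal) (_ : β < o), CBderiv X β :=
  Ordinal.limitRecOn_limit _ _ _ _ ho

theorem limitPoints_DSet (β : Ordinal) : limitPoints (DSet β) = DSet (β + 1) := by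
  have hw : (0 : Ordinal) < ω ^ β := opow_pos β omega0_pos
  ext x
  constructor
  · rintro ⟨⟨hdvd, _⟩, hlp⟩
    have hx0 : x.toOrdinal ≠ 0 := by
      intro h0
      obtain ⟨y, ⟨hyU, _⟩, hyx⟩ := hlp _ (Omega1.isOpen_Iic x) (Set.mem_Iic.mpr le_rfl)
      refine hyx (Omega1.toOrdinal_injective (le_antisymm ?_ ?_))
      · exact h0 ▸ (Omega1.le_iff.mp (Set.mem_Iic.mp hyU))
      · exact h0 ▸ zero_le
    obtain ⟨γ, hγ⟩ := hdvd
    rcases Ordinal.zero_or_succ_or_isSuccLimit γ with rfl | ⟨δ, rfl⟩ | hlim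
    · exact absurd (by rw [hγ, mul_zero]) hx0
    · exfalso
      have hμx : ω ^ β * δ < x.toOrdinal := by
        rw [hγ]; exact (mul_lt_mul_iff_of_pos_left hw).mpr (Order.lt_succ δ)
      obtain ⟨y, ⟨hyU, ⟨ε, hε⟩, _⟩, hyx⟩ :=
        hlp _ (Omega1.isOpen_Ioc' (Omega1.mk (ω ^ β * δ) (hμx.trans x.toOrdinal_lt)) x)
          ⟨Omega1.lt_iff.mpr hμx, le_rfl⟩
      have h1 : δ < ε := by
        have h := Omega1.lt_iff.mp hyU.1
        rw [hε] at h
        exact (mul_lt_mul_iff_of_pos_left hw).mp h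
      have h2 : ε ≤ Order.succ δ := by
        have h := Omega1.le_iff.mp hyU.2
        rw [hε, hγ] at h
        exact (mul_le_mul_iff_of_pos_left hw).mp h
      refine hyx (Omega1.toOrdinal_injective ?_)
      rw [hε, hγ, le_antisymm h2 (Order.succ_le_of_lt h1)]
    · obtain ⟨γ', hγ'⟩ := (Ordinal.isSuccLimit_iff_omega0_dvd.mp hlim).2
      exact ⟨⟨γ', by rw [hγ, hγ', Ordinal.add_one_eq_succ, opow_succ, mul_assoc]⟩, Or.inr hx0⟩
  · rintro ⟨⟨γ, hγ⟩, h2⟩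
    have hx0 : x.toOrdinal ≠ 0 :=
      h2.resolve_left (fun h => (Ordinal.succ_ne_zero β) (by rwa [Ordinal.add_one_eq_succ] at h))
    have hγ0 : γ ≠ 0 := fun h => hx0 (by rw [hγ, h, mul_zero])
    have hxA : x ∈ DSet β :=
      ⟨dvd_trans (opow_dvd_opow _ (le_self_add (a := β) (b := 1))) ⟨γ, hγ⟩, Or.inr hx0⟩
    refine ⟨hxA, fun U hU hxU => ?_⟩
    obtain ⟨c, _, hcx, hsub⟩ := Omega1.nhds_Ioc (hU.mem_nhds hxU) (zeroMk_lt hx0)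
    have hml : Order.IsSuccLimit (ω * γ) :=
      Ordinal.isSuccLimit_mul_left isSuccLimit_omega0 (pos_iff_ne_zero.mpr hγ0)
    have hxval : x.toOrdinal = ω ^ β * (ω * γ) := by rw [hγ, Ordinal.add_one_eq_succ, opow_succ, mul_assoc]
    have hq1 : c.toOrdinal / ω ^ β + 1 < ω * γ := by
      rw [Ordinal.add_one_eq_succ]
      apply hml.succ_lt
      rw [Ordinal.div_lt (opow_ne_zero β omega0_ne_zero), ← hxval]
      exact Omega1.lt_iff.mp hcx
    have hylt : ω ^ β * (c.toOrdinal / ω ^ β + 1) < x.toOrdinal := by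
      rw [hxval]; exact (mul_lt_mul_iff_of_pos_left hw).mpr hq1
    have hcy : c.toOrdinal < ω ^ β * (c.toOrdinal / ω ^ β + 1) := by
      rw [Ordinal.add_one_eq_succ]
      exact Ordinal.lt_mul_succ_div c.toOrdinal (opow_ne_zero β omega0_ne_zero)
    refine ⟨Omega1.mk _ (hylt.trans x.toOrdinal_lt),
      ⟨hsub ⟨Omega1.lt_iff.mpr hcy, (Omega1.lt_iff.mpr hylt).le⟩,
        ⟨c.toOrdinal / ω ^ β + 1, rfl⟩, Or.inr ?_⟩, ?_⟩
    · exact ne_of_gt (mul_pos hw (pos_iff_ne_zero.mpr (by rw [Ordinal.add_one_eq_succ]; exact Ordinal.succ_ne_zero _)))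
    · exact fun h => (ne_of_lt hylt) (congrArg Omega1.toOrdinal h)

theorem iInter_DSet {o : Ordinal} (ho : Order.IsSuccLimit o) :
    ⋂ (β : Ordinal) (_ : β < o), DSet β = DSet o := by
  ext x
  simp only [Set.mem_iInter]
  constructor
  · intro h
    have hx0 : x.toOrdinal ≠ 0 := by
      rcases (h 1 (Ordinal.one_lt_of_isSuccLimit ho)).2 with h2 | h2
      · exact absurd h2 one_ne_zero
      · exact h2
    exact ⟨opow_dvd_of_forall_lt ho (fun β hβ => (h β hβ).1), Or.inr hx0⟩
  · rintro ⟨hdvd, h2⟩ β hβ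
    exact DSet_anti hβ.le ⟨hdvd, h2⟩

theorem CBderiv_eq (β : Ordinal) : CBderiv Omega1 β = DSet β := by
  induction β using Ordinal.induction with
  | _ β ih =>
    rcases Ordinal.zero_or_succ_or_isSuccLimit β with rfl | ⟨δ, rfl⟩ | hlim
    · rw [CBderiv_zero, DSet_zero]
    · rw [← Ordinal.add_one_eq_succ, CBderiv_succ,
        ih δ (by rw [← Ordinal.add_one_eq_succ]; exact lt_add_one δ), limitPoints_DSet]
    · rw [CBderiv_limit _ hlim, ← iInter_DSet hlim]
      exact Set.iInter₂_congr ih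
/-! ### The Cantor–Bendixson levels of `Omega1` -/

/-- The `β`-th Cantor–Bendixson level. -/
def LevelD (β : Ordinal) : Set Omega1 := DSet β \ DSet (β + 1)

theorem level_eq (β : Ordinal) :
    CBderiv Omega1 β \ CBderiv Omega1 (β + 1) = LevelD β := by
  rw [LevelD, CBderiv_eq, CBderiv_eq]

theorem mem_levelD_iff {β : Ordinal} {x : Omega1} :
    x ∈ LevelD β ↔ (∃ γ, x.toOrdinal = ω ^ β * (γ + 1)) ∨ (β = 0 ∧ x.toOrdinal = 0) := by
  have hw : (0 : Ordinal) < ω ^ β := opow_pos β omega0_pos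
  constructor
  · rintro ⟨⟨⟨γ, hγ⟩, hor⟩, hnot⟩
    rcases eq_or_ne x.toOrdinal 0 with h0 | h0
    · exact Or.inr ⟨hor.resolve_right (fun h => h h0), h0⟩
    · left
      rcases Ordinal.zero_or_succ_or_isSuccLimit γ with rfl | ⟨δ, rfl⟩ | hlim
      · exact absurd (by rw [hγ, mul_zero]) h0
      · exact ⟨δ, by rw [hγ, Ordinal.add_one_eq_succ]⟩
      · obtain ⟨c, hc⟩ := (Ordinal.isSuccLimit_iff_omega0_dvd.mp hlim).2
        exact absurd ⟨⟨c, by rw [hγ, hc, Ordinal.add_one_eq_succ, opow_succ, mul_assoc]⟩,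
          Or.inr h0⟩ hnot
  · rintro (⟨γ, hγ⟩ | ⟨rfl, h0⟩)
    · have hx0 : x.toOrdinal ≠ 0 := by
        rw [hγ]
        exact ne_of_gt (mul_pos hw
          (pos_iff_ne_zero.mpr (by rw [Ordinal.add_one_eq_succ]; exact Ordinal.succ_ne_zero _)))
      refine ⟨⟨⟨γ + 1, hγ⟩, Or.inr hx0⟩, fun hmem => ?_⟩
      obtain ⟨⟨c, hc⟩, -⟩ := hmem
      rw [hγ, Ordinal.add_one_eq_succ β, opow_succ, mul_assoc] at hc
      have h1 : γ + 1 = ω * c := (mul_right_inj' hw.ne').mp hc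
      have hlim : Order.IsSuccLimit (γ + 1) := Ordinal.isSuccLimit_iff_omega0_dvd.mpr
        ⟨by rw [Ordinal.add_one_eq_succ]; exact Ordinal.succ_ne_zero _, ⟨c, h1⟩⟩
      have h2 := hlim.succ_lt (by rw [Ordinal.add_one_eq_succ]; exact Order.lt_succ γ)
      rw [Ordinal.add_one_eq_succ] at h2
      exact absurd h2 (lt_irrefl _)
    · refine ⟨⟨by rw [h0]; exact dvd_zero _, Or.inl rfl⟩, fun hmem => ?_⟩
      rcases hmem.2 with h | h
      · exact one_ne_zero (by rwa [zero_add] at h)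
      · exact h h0

theorem levelD_unique {β γ : Ordinal} {x : Omega1} (hβ : x ∈ LevelD β) (hγ : x ∈ LevelD γ) :
    β = γ := by
  by_contra hne
  rcases lt_or_gt_of_ne hne with h | h
  · exact hβ.2 (DSet_anti (by rw [Ordinal.add_one_eq_succ]; exact Order.succ_le_of_lt h) hγ.1)
  · exact hγ.2 (DSet_anti (by rw [Ordinal.add_one_eq_succ]; exact Order.succ_le_of_lt h) hβ.1)

theorem exists_levelD (x : Omega1) : ∃ β, β < ω_ 1 ∧ x ∈ LevelD β := by
  rcases eq_or_ne x.toOrdinal 0 with h0 | h0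
  · exact ⟨0, omega_pos 1, mem_levelD_iff.mpr (Or.inr ⟨rfl, h0⟩)⟩
  · set S := {β : Ordinal | ¬ ω ^ β ∣ x.toOrdinal} with hS
    have hne : S.Nonempty := by
      refine ⟨x.toOrdinal + 1, fun hdvd => ?_⟩
      have h1 : x.toOrdinal + 1 ≤ ω ^ (x.toOrdinal + 1) := right_le_opow _ one_lt_omega0
      have h2 : ω ^ (x.toOrdinal + 1) ≤ x.toOrdinal := Ordinal.le_of_dvd h0 hdvd
      exact absurd (h1.trans h2) (by simp)
    have hmem : sInf S ∈ S := csInf_mem hne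
    have hμnotlim : ¬ Order.IsSuccLimit (sInf S) := fun hlim => hmem (opow_dvd_of_forall_lt hlim
      (fun β hβ => not_not.mp (fun hn => (csInf_le' (show β ∈ S from hn)).not_gt hβ)))
    rcases Ordinal.zero_or_succ_or_isSuccLimit (sInf S) with h | ⟨ρ, hρ⟩ | h
    · exfalso
      have h0' : (0 : Ordinal) ∈ S := h ▸ hmem
      exact h0' (by rw [opow_zero]; exact one_dvd _)
    · have hρdvd : ω ^ ρ ∣ x.toOrdinal :=
        not_not.mp (fun hn => (csInf_le' (show ρ ∈ S from hn)).not_gt (hρ ▸ Order.lt_succ ρ))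
      have hρΩ : ρ < ω_ 1 :=
        lt_of_le_of_lt ((right_le_opow ρ one_lt_omega0).trans (Ordinal.le_of_dvd h0 hρdvd))
          x.toOrdinal_lt
      refine ⟨ρ, hρΩ, ⟨⟨hρdvd, Or.inr h0⟩, fun hmem' => ?_⟩⟩
      have : ¬ ω ^ Order.succ ρ ∣ x.toOrdinal := hρ ▸ hmem
      exact this (by rw [← Ordinal.add_one_eq_succ]; exact hmem'.1)
    · exact absurd h hμnotlim
/-! ### Invariance of the levels under homeomorphisms; the closure is contained in the product -/

theorem image_limitPoints_subset {X : Type*} [TopologicalSpace X] (g : X ≃ₜ X) (A : Set X) :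
    (⇑g) '' limitPoints A ⊆ limitPoints ((⇑g) '' A) := by
  rintro - ⟨x, ⟨hxA, hx⟩, rfl⟩
  refine ⟨⟨x, hxA, rfl⟩, fun U hU hgx => ?_⟩
  obtain ⟨y, ⟨hyU, hyA⟩, hyx⟩ := hx ((⇑g) ⁻¹' U) (hU.preimage g.continuous) hgx
  exact ⟨g y, ⟨hyU, ⟨y, hyA, rfl⟩⟩, fun h => hyx (g.injective h)⟩

theorem image_limitPoints {X : Type*} [TopologicalSpace X] (g : X ≃ₜ X) (A : Set X) :
    (⇑g) '' limitPoints A = limitPoints ((⇑g) '' A) := by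
  refine Set.Subset.antisymm (image_limitPoints_subset g A) ?_
  intro y hy
  have h2 := image_limitPoints_subset g.symm ((⇑g) '' A) ⟨y, hy, rfl⟩
  rw [← Set.image_comp, g.symm_comp_self, Set.image_id] at h2
  exact ⟨g.symm y, h2, g.apply_symm_apply y⟩

theorem image_CBderiv (g : Omega1 ≃ₜ Omega1) (β : Ordinal) :
    (⇑g) '' CBderiv Omega1 β = CBderiv Omega1 β := by
  induction β using Ordinal.induction with
  | _ β ih =>
    rcases Ordinal.zero_or_succ_or_isSuccLimit β with rfl | ⟨δ, rfl⟩ | hlim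
    · rw [CBderiv_zero, Set.image_univ]
      exact Set.range_eq_univ.mpr g.surjective
    · rw [← Ordinal.add_one_eq_succ, CBderiv_succ, image_limitPoints,
        ih δ (by rw [← Ordinal.add_one_eq_succ]; exact lt_add_one δ)]
    · rw [CBderiv_limit _ hlim, Set.image_iInter g.bijective]
      refine Set.iInter_congr fun γ => ?_
      rw [Set.image_iInter g.bijective]
      exact Set.iInter_congr fun hγ => ih γ hγ

theorem image_levelD (g : Omega1 ≃ₜ Omega1) (β : Ordinal) :
    (⇑g) '' LevelD β = LevelD β := by
  rw [← level_eq, Set.image_diff g.injective, image_CBderiv, image_CBderiv, level_eq]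

theorem mem_levelD_homeo {g : Omega1 ≃ₜ Omega1} {x : Omega1} {β : Ordinal}
    (hx : x ∈ LevelD β) : g x ∈ LevelD β := by
  rw [← image_levelD g β]; exact ⟨x, hx, rfl⟩

theorem perm_preserves_of_mem_closure {σ : Equiv.Perm Omega1}
    (hσ : σ ∈ closure (Set.range fun g : Omega1 ≃ₜ Omega1 => g.toEquiv))
    {x : Omega1} {β : Ordinal} (hx : x ∈ LevelD β) : σ x ∈ LevelD β := by
  have hpi : @IsOpen (Omega1 → Omega1) (@Pi.topologicalSpace Omega1 (fun _ => Omega1) (fun _ => ⊥))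
      {f : Omega1 → Omega1 | f x ∈ (LevelD β)ᶜ} := by
    exact @Continuous.isOpen_preimage (Omega1 → Omega1) Omega1
      (@Pi.topologicalSpace Omega1 (fun _ => Omega1) (fun _ => ⊥)) ⊥
      (fun f => f x)
      (@continuous_apply Omega1 (fun _ => Omega1) (fun _ => ⊥) x)
      ((LevelD β)ᶜ) (@isOpen_discrete _ ⊥ (discreteTopology_bot Omega1) _)
  have hcl : IsClosed {τ : Equiv.Perm Omega1 | τ x ∈ LevelD β} := by
    rw [← isOpen_compl_iff]
    have heq : {τ : Equiv.Perm Omega1 | τ x ∈ LevelD β}ᶜ =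
        (fun τ : Equiv.Perm Omega1 => (τ : Omega1 → Omega1)) ⁻¹'
          {f : Omega1 → Omega1 | f x ∈ (LevelD β)ᶜ} := rfl
    rw [heq]
    exact @isOpen_induced (Equiv.Perm Omega1) (Omega1 → Omega1)
      (@Pi.topologicalSpace Omega1 (fun _ => Omega1) (fun _ => ⊥))
      (fun τ : Equiv.Perm Omega1 => (τ : Omega1 → Omega1)) _ hpi
  have hrange : (Set.range fun g : Omega1 ≃ₜ Omega1 => g.toEquiv) ⊆
      {τ : Equiv.Perm Omega1 | τ x ∈ LevelD β} := by
    rintro - ⟨g, rfl⟩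
    exact mem_levelD_homeo hx
  exact closure_minimal hrange hcl hσ

theorem closure_subset_levels {σ : Equiv.Perm Omega1}
    (hσ : σ ∈ closure (Set.range fun g : Omega1 ≃ₜ Omega1 => g.toEquiv)) (β : Ordinal) :
    (fun x => σ x) '' (LevelD β) = LevelD β := by
  apply Set.Subset.antisymm
  · rintro - ⟨x, hx, rfl⟩
    exact perm_preserves_of_mem_closure hσ hx
  · intro y hy
    obtain ⟨δ, hδΩ, hδ⟩ := exists_levelD (σ.symm y)
    have h1 : σ (σ.symm y) ∈ LevelD δ := perm_preserves_of_mem_closure hσ hδ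
    rw [Equiv.apply_symm_apply] at h1
    have hδβ : δ = β := levelD_unique h1 hy
    exact ⟨σ.symm y, hδβ ▸ hδ, Equiv.apply_symm_apply σ y⟩
/-! ### Each level has the cardinality of `Omega1` -/

/-- Conjugation of permutation groups by an equivalence, as a `MulEquiv`. -/
def permMulEquiv {α β : Type*} (e : α ≃ β) : Equiv.Perm α ≃* Equiv.Perm β where
  toFun p := (e.symm.trans p).trans e
  invFun q := (e.trans q).trans e.symm
  left_inv p := by ext x; simp
  right_inv q := by ext x; simp
  map_mul' p q := by ext x; simp [Equiv.Perm.mul_apply]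

theorem levelD_equiv_omega1 {β : Ordinal} (hβ : β < ω_ 1) :
    Nonempty (↥(LevelD β) ≃ Omega1) := by
  rw [← Cardinal.eq]
  have hf : ∀ x : Omega1, ω ^ β * (x.toOrdinal + 1) < ω_ 1 := fun x =>
    mul_lt_omega1' (opow_lt_omega1' hβ) (add_lt_omega1' x.toOrdinal_lt one_lt_omega1')
  have hle2 : Cardinal.mk Omega1 ≤ Cardinal.mk (↥(LevelD β)) := by
    refine Cardinal.mk_le_of_injective (f := fun x : Omega1 =>
      (⟨Omega1.mk (ω ^ β * (x.toOrdinal + 1)) (hf x),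
        mem_levelD_iff.mpr (Or.inl ⟨x.toOrdinal, rfl⟩)⟩ : ↥(LevelD β))) ?_
    intro x y hxy
    have h1 := congrArg (fun z : ↥(LevelD β) => (z : Omega1).toOrdinal) hxy
    simp only [Omega1.mk_toOrdinal] at h1
    have h2 : x.toOrdinal + 1 = y.toOrdinal + 1 :=
      (mul_right_inj' (opow_pos β omega0_pos).ne').mp h1
    have h3 : x.toOrdinal = y.toOrdinal := by
      rwa [Ordinal.add_one_eq_succ, Ordinal.add_one_eq_succ, Order.succ_eq_succ_iff] at h2
    exact Omega1.toOrdinal_injective h3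
  exact le_antisymm (Cardinal.mk_set_le _) hle2

theorem levelD_perm_mulEquiv {β : Ordinal} (hβ : β < ω_ 1) :
    Nonempty (Equiv.Perm (↥(LevelD β)) ≃* Equiv.Perm Omega1) := by
  obtain ⟨e⟩ := levelD_equiv_omega1 hβ
  exact ⟨permMulEquiv e⟩
/-! ### Building homeomorphisms: the shift on an interval is continuous -/

theorem continuousAt_piece {μ ν w : Ordinal} (hνΩ : ν < ω_ 1)
    {f : Omega1 → Omega1}
    (hf : ∀ z : Omega1, μ < z.toOrdinal → z.toOrdinal ≤ μ + w →
      (f z).toOrdinal = ν + (z.toOrdinal - μ))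
    {z : Omega1} (hz1 : μ < z.toOrdinal) (hz2 : z.toOrdinal ≤ μ + w) :
    ContinuousAt f z := by
  rw [ContinuousAt, Filter.tendsto_def]
  intro N hN
  have hzμ : μ + (z.toOrdinal - μ) = z.toOrdinal := Ordinal.add_sub_cancel_of_le hz1.le
  have hfz : (f z).toOrdinal = ν + (z.toOrdinal - μ) := hf z hz1 hz2
  have hsubpos : 0 < z.toOrdinal - μ := by
    rw [pos_iff_ne_zero]
    exact fun h => (Ordinal.sub_eq_zero_iff_le.mp h).not_gt hz1
  have hν_lt : Omega1.mk ν hνΩ < f z := by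
    rw [Omega1.lt_iff, Omega1.mk_toOrdinal, hfz]
    simpa using (add_lt_add_iff_left ν).mpr hsubpos
  obtain ⟨c, hc1, hc2, hsub⟩ := Omega1.nhds_Ioc hN hν_lt
  have hcν : ν + (c.toOrdinal - ν) = c.toOrdinal :=
    Ordinal.add_sub_cancel_of_le (Omega1.le_iff.mp hc1)
  have hcd : c.toOrdinal - ν < z.toOrdinal - μ := by
    have h := Omega1.lt_iff.mp hc2
    rw [hfz, ← hcν] at h
    exact (add_lt_add_iff_left ν).mp h
  have hdz : μ + (c.toOrdinal - ν) < z.toOrdinal := by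
    rw [← hzμ]
    exact (add_lt_add_iff_left μ).mpr hcd
  refine Filter.mem_of_superset
    ((Omega1.isOpen_Ioc' (Omega1.mk _ (hdz.trans z.toOrdinal_lt)) z).mem_nhds
      ⟨Omega1.lt_iff.mpr hdz, le_rfl⟩) ?_
  intro u hu
  have hu1 : μ < u.toOrdinal :=
    lt_of_le_of_lt (le_self_add) (Omega1.lt_iff.mp hu.1)
  have hu2 : u.toOrdinal ≤ μ + w := (Omega1.le_iff.mp hu.2).trans hz2
  have hfu : (f u).toOrdinal = ν + (u.toOrdinal - μ) := hf u hu1 hu2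
  have huμ : μ + (u.toOrdinal - μ) = u.toOrdinal := Ordinal.add_sub_cancel_of_le hu1.le
  refine hsub ⟨?_, ?_⟩
  · -- c < f u
    rw [Omega1.lt_iff, hfu, ← hcν]
    rw [add_lt_add_iff_left]
    have h := Omega1.lt_iff.mp hu.1
    rw [Omega1.mk_toOrdinal, ← huμ] at h
    exact (add_lt_add_iff_left μ).mp h
  · -- f u ≤ f z
    rw [Omega1.le_iff, hfu, hfz]
    apply add_le_add_right
    rw [Ordinal.sub_le]
    rw [hzμ]
    exact Omega1.le_iff.mp hu.2
/-! ### The swap construction -/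

theorem isOpen_singleton_levelD0 {a : Omega1} (ha : a ∈ LevelD 0) : IsOpen ({a} : Set Omega1) := by
  rcases mem_levelD_iff.mp ha with ⟨γ, hγ⟩ | ⟨-, h0⟩
  · rw [opow_zero, one_mul] at hγ
    have hγa : γ < a.toOrdinal := by rw [hγ]; exact lt_add_one γ
    have hset : {a} = Set.Ioc (Omega1.mk γ (hγa.trans a.toOrdinal_lt)) a := by
      ext z
      simp only [Set.mem_singleton_iff, Set.mem_Ioc]
      constructor
      · rintro rfl; exact ⟨Omega1.lt_iff.mpr hγa, le_rfl⟩
      · rintro ⟨h1, h2⟩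
        refine Omega1.toOrdinal_injective ?_
        have h1' := Omega1.lt_iff.mp h1
        have h2' := Omega1.le_iff.mp h2
        rw [Omega1.mk_toOrdinal] at h1'
        rw [hγ] at h2' ⊢
        exact le_antisymm h2' (by rwa [Ordinal.add_one_eq_succ, Order.succ_le_iff])
    rw [hset]; exact Omega1.isOpen_Ioc' _ _
  · have hset : {a} = Set.Iic a := by
      ext z
      simp only [Set.mem_singleton_iff, Set.mem_Iic]
      constructor
      · rintro rfl; exact le_rfl
      · intro h
        refine Omega1.toOrdinal_injective ?_
        have h' := Omega1.le_iff.mp h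
        rw [h0] at h' ⊢
        exact nonpos_iff_eq_zero.mp h'
    rw [hset]; exact Omega1.isOpen_Iic a

theorem isClosed_singleton' (x : Omega1) : IsClosed ({x} : Set Omega1) := by
  have hset : ({x} : Set Omega1) = Set.Iic x ∩ Set.Ici x := by
    ext z; simp [le_antisymm_iff, and_comm]
  rw [hset]; exact isClosed_Iic.inter isClosed_Ici

theorem continuous_swap_isolated {a b : Omega1} (ha : IsOpen ({a} : Set Omega1))
    (hb : IsOpen ({b} : Set Omega1)) : Continuous (Equiv.swap a b) := by
  rw [continuous_iff_continuousAt]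
  intro z
  by_cases hza : z = a
  · subst hza
    rw [ContinuousAt, (isOpen_singleton_iff_nhds_eq_pure z).mp ha]
    exact tendsto_pure_nhds _ _
  by_cases hzb : z = b
  · subst hzb
    rw [ContinuousAt, (isOpen_singleton_iff_nhds_eq_pure z).mp hb]
    exact tendsto_pure_nhds _ _
  · have hopen : IsOpen (({a, b} : Set Omega1)ᶜ) := by
      rw [isOpen_compl_iff, Set.insert_eq]
      exact (isClosed_singleton' a).union (isClosed_singleton' b)
    have hz : z ∈ (({a, b} : Set Omega1)ᶜ) := by simp [hza, hzb]
    have heq : Set.EqOn id (⇑(Equiv.swap a b)) (({a, b} : Set Omega1)ᶜ) := by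
      intro u hu
      simp only [Set.mem_compl_iff, Set.mem_insert_iff, Set.mem_singleton_iff, not_or] at hu
      exact (Equiv.swap_apply_of_ne_of_ne hu.1 hu.2).symm
    exact continuousAt_id.congr (Filter.eventuallyEq_of_mem (hopen.mem_nhds hz) heq)

/-- Choosing a clopen interval base point below a level-`β` point avoiding a finite set. -/
theorem exists_good_base {a : Omega1} {β γa : Ordinal} (hβ0 : β ≠ 0)
    (hγa : a.toOrdinal = ω ^ β * (γa + 1)) (S : Finset Omega1) (haS : a ∉ S) :
    ∃ μ : Ordinal, μ < a.toOrdinal ∧ μ + ω ^ β = a.toOrdinal ∧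
      ∀ z ∈ S, μ < z.toOrdinal → a.toOrdinal < z.toOrdinal := by
  classical
  have hw0 : (0 : Ordinal) < ω ^ β := opow_pos β omega0_pos
  have hwlim : Order.IsSuccLimit (ω ^ β) := isSuccLimit_opow_left isSuccLimit_omega0 hβ0
  have haval : a.toOrdinal = ω ^ β * γa + ω ^ β := by rw [hγa, mul_add, mul_one]
  have halim : Order.IsSuccLimit a.toOrdinal := haval ▸ Ordinal.isSuccLimit_add _ hwlim
  set s := (S.filter (· < a)).sup (fun z => z.toOrdinal + 1) with hs
  set μ := max (ω ^ β * γa) s with hμ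
  have hμa : μ < a.toOrdinal := by
    rw [hμ, max_lt_iff]
    constructor
    · rw [haval]
      have h := (add_lt_add_iff_left (ω ^ β * γa)).mpr hw0
      rwa [add_zero] at h
    · rw [Finset.sup_lt_iff (by rw [Ordinal.bot_eq_zero]; exact halim.pos)]
      intro z hz
      rw [Finset.mem_filter] at hz
      rw [Ordinal.add_one_eq_succ]
      exact halim.succ_lt (Omega1.lt_iff.mp hz.2)
  have hle : ω ^ β * γa ≤ μ := le_max_left _ _
  have hadd : μ + ω ^ β = a.toOrdinal := by
    have h1 : μ - ω ^ β * γa < ω ^ β := by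
      have h3 : ω ^ β * γa + (μ - ω ^ β * γa) < ω ^ β * γa + ω ^ β := by
        rw [Ordinal.add_sub_cancel_of_le hle, ← haval]; exact hμa
      exact (add_lt_add_iff_left _).mp h3
    calc μ + ω ^ β = ω ^ β * γa + ((μ - ω ^ β * γa) + ω ^ β) := by
          rw [← add_assoc, Ordinal.add_sub_cancel_of_le hle]
      _ = ω ^ β * γa + ω ^ β := by rw [Ordinal.add_omega0_opow h1]
      _ = a.toOrdinal := haval.symm
  refine ⟨μ, hμa, hadd, fun z hz hzμ => ?_⟩
  by_contra hle2
  push_neg at hle2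
  have hza : z < a := by
    rcases lt_or_eq_of_le (Omega1.le_iff.mpr hle2) with h | h
    · exact h
    · exact absurd (h ▸ hz) haS
  have h4 : z.toOrdinal + 1 ≤ s :=
    Finset.le_sup (f := fun z : Omega1 => z.toOrdinal + 1) (Finset.mem_filter.mpr ⟨hz, hza⟩)
  exact absurd (((lt_add_one z.toOrdinal).trans_le h4).trans_le (le_max_right _ _)) hzμ.not_gt
theorem exists_swap_homeo {a b : Omega1} {β : Ordinal} (hab : a ≠ b)
    (ha : a ∈ LevelD β) (hb : b ∈ LevelD β) (T : Finset Omega1)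
    (haT : a ∉ T) (hbT : b ∉ T) :
    ∃ t : Omega1 ≃ₜ Omega1, t a = b ∧ t b = a ∧ ∀ z ∈ T, t z = z := by
  classical
  rcases eq_or_ne β 0 with rfl | hβ0
  · have hcont := continuous_swap_isolated (isOpen_singleton_levelD0 ha)
      (isOpen_singleton_levelD0 hb)
    exact ⟨Homeomorph.mk (Equiv.swap a b) hcont (by show Continuous ⇑(Equiv.swap a b).symm; rw [Equiv.symm_swap]; exact hcont),
      Equiv.swap_apply_left a b, Equiv.swap_apply_right a b, fun z hz =>
        Equiv.swap_apply_of_ne_of_ne (fun h => haT (h ▸ hz)) (fun h => hbT (h ▸ hz))⟩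
  · obtain ⟨γa, hγa⟩ := (mem_levelD_iff.mp ha).resolve_right (fun h => hβ0 h.1)
    obtain ⟨γb, hγb⟩ := (mem_levelD_iff.mp hb).resolve_right (fun h => hβ0 h.1)
    obtain ⟨μ, hμa, hμadd, hμT⟩ := exists_good_base hβ0 hγa (insert b T)
      (by simp only [Finset.mem_insert, not_or]; exact ⟨hab, haT⟩)
    obtain ⟨ν, hνb, hνadd, hνT⟩ := exists_good_base hβ0 hγb (insert a T)
      (by simp only [Finset.mem_insert, not_or]; exact ⟨hab.symm, hbT⟩)
    set w := ω ^ β with hwdef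
    have hμΩ : μ < ω_ 1 := hμa.trans a.toOrdinal_lt
    have hνΩ : ν < ω_ 1 := hνb.trans b.toOrdinal_lt
    set P : Omega1 → Prop := fun z => μ < z.toOrdinal ∧ z.toOrdinal ≤ μ + w with hP
    set Q : Omega1 → Prop := fun z => ν < z.toOrdinal ∧ z.toOrdinal ≤ ν + w with hQ
    have hPQ : ∀ z, P z → Q z → False := by
      intro z hp hq
      rcases hab.lt_or_gt with h | h
      · have h1 : ν < a.toOrdinal := lt_of_lt_of_le hq.1 (hμadd ▸ hp.2)
        exact absurd (Omega1.lt_iff.mp h)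
          (hνT a (Finset.mem_insert_self a T) h1).not_gt
      · have h1 : μ < b.toOrdinal := lt_of_lt_of_le hp.1 (hνadd ▸ hq.2)
        exact absurd (Omega1.lt_iff.mp h)
          (hμT b (Finset.mem_insert_self b T) h1).not_gt
    have hPa : P a := ⟨hμa, le_of_eq hμadd.symm⟩
    have hQb : Q b := ⟨hνb, le_of_eq hνadd.symm⟩
    have hPT : ∀ z ∈ T, ¬ P z := fun z hz hp =>
      absurd (hμT z (Finset.mem_insert_of_mem hz) hp.1) (hμadd ▸ hp.2).not_gt
    have hQT : ∀ z ∈ T, ¬ Q z := fun z hz hq =>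
      absurd (hνT z (Finset.mem_insert_of_mem hz) hq.1) (hνadd ▸ hq.2).not_gt
    have hbound1 : ∀ z : Omega1, ν + (z.toOrdinal - μ) < ω_ 1 := fun z =>
      add_lt_omega1' hνΩ (lt_of_le_of_lt (Ordinal.sub_le_self _ _) z.toOrdinal_lt)
    have hbound2 : ∀ z : Omega1, μ + (z.toOrdinal - ν) < ω_ 1 := fun z =>
      add_lt_omega1' hμΩ (lt_of_le_of_lt (Ordinal.sub_le_self _ _) z.toOrdinal_lt)
    set f : Omega1 → Omega1 := fun z =>
      if P z then Omega1.mk (ν + (z.toOrdinal - μ)) (hbound1 z)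
      else if Q z then Omega1.mk (μ + (z.toOrdinal - ν)) (hbound2 z)
      else z with hfdef
    have hfP : ∀ z, P z → (f z).toOrdinal = ν + (z.toOrdinal - μ) := by
      intro z hz
      simp only [hfdef]
      rw [if_pos hz]
      exact rfl
    have hfQ : ∀ z, Q z → (f z).toOrdinal = μ + (z.toOrdinal - ν) := by
      intro z hz
      simp only [hfdef]
      rw [if_neg (fun hp => hPQ z hp hz), if_pos hz]
      exact rfl
    have hfid : ∀ z, ¬ P z → ¬ Q z → f z = z := by
      intro z h1 h2
      simp only [hfdef]
      rw [if_neg h1, if_neg h2]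
    have hPimg : ∀ z, P z → Q (f z) := by
      intro z hz
      constructor
      · rw [hfP z hz]
        have h0 : 0 < z.toOrdinal - μ := by
          rw [pos_iff_ne_zero]
          exact fun h => (Ordinal.sub_eq_zero_iff_le.mp h).not_gt hz.1
        have h1 := (add_lt_add_iff_left ν).mpr h0
        rwa [add_zero] at h1
      · rw [hfP z hz]
        apply add_le_add_right
        rw [Ordinal.sub_le]
        exact hz.2
    have hQimg : ∀ z, Q z → P (f z) := by
      intro z hz
      constructor
      · rw [hfQ z hz]
        have h0 : 0 < z.toOrdinal - ν := by
          rw [pos_iff_ne_zero]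
          exact fun h => (Ordinal.sub_eq_zero_iff_le.mp h).not_gt hz.1
        have h1 := (add_lt_add_iff_left μ).mpr h0
        rwa [add_zero] at h1
      · rw [hfQ z hz]
        apply add_le_add_right
        rw [Ordinal.sub_le]
        exact hz.2
    have hinv : Function.Involutive f := by
      intro z
      by_cases hp : P z
      · apply Omega1.toOrdinal_injective
        rw [hfQ _ (hPimg z hp), hfP _ hp, Ordinal.add_sub_cancel,
          Ordinal.add_sub_cancel_of_le hp.1.le]
      · by_cases hq : Q z
        · apply Omega1.toOrdinal_injective
          rw [hfP _ (hQimg z hq), hfQ _ hq, Ordinal.add_sub_cancel,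
            Ordinal.add_sub_cancel_of_le hq.1.le]
        · rw [hfid z hp hq, hfid z hp hq]
    have hcont : Continuous f := by
      rw [continuous_iff_continuousAt]
      intro z
      by_cases hp : P z
      · exact continuousAt_piece hνΩ (fun z' h1 h2 => hfP z' ⟨h1, h2⟩) hp.1 hp.2
      · by_cases hq : Q z
        · exact continuousAt_piece hμΩ (fun z' h1 h2 => hfQ z' ⟨h1, h2⟩) hq.1 hq.2
        · have hPiff : ∀ u : Omega1, P u ↔ u ∈ Set.Ioc (Omega1.mk μ hμΩ) a := by
            intro u
            constructor
            · rintro ⟨h1, h2⟩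
              exact ⟨Omega1.lt_iff.mpr h1, Omega1.le_iff.mpr (hμadd ▸ h2)⟩
            · rintro ⟨h1, h2⟩
              exact ⟨Omega1.lt_iff.mp h1, hμadd ▸ (Omega1.le_iff.mp h2)⟩
          have hQiff : ∀ u : Omega1, Q u ↔ u ∈ Set.Ioc (Omega1.mk ν hνΩ) b := by
            intro u
            constructor
            · rintro ⟨h1, h2⟩
              exact ⟨Omega1.lt_iff.mpr h1, Omega1.le_iff.mpr (hνadd ▸ h2)⟩
            · rintro ⟨h1, h2⟩
              exact ⟨Omega1.lt_iff.mp h1, hνadd ▸ (Omega1.le_iff.mp h2)⟩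
          have hWopen : IsOpen ((Set.Ioc (Omega1.mk μ hμΩ) a ∪ Set.Ioc (Omega1.mk ν hνΩ) b)ᶜ) :=
            ((Omega1.isClosed_Ioc' _ _).union (Omega1.isClosed_Ioc' _ _)).isOpen_compl
          have hzW : z ∈ (Set.Ioc (Omega1.mk μ hμΩ) a ∪ Set.Ioc (Omega1.mk ν hνΩ) b)ᶜ := by
            intro hmem
            rcases hmem with hmem | hmem
            · exact hp ((hPiff z).mpr hmem)
            · exact hq ((hQiff z).mpr hmem)
          have heq : Set.EqOn id f
              ((Set.Ioc (Omega1.mk μ hμΩ) a ∪ Set.Ioc (Omega1.mk ν hνΩ) b)ᶜ) := by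
            intro u hu
            rw [Set.mem_compl_iff, Set.mem_union, not_or] at hu
            exact (hfid u (fun hpu => hu.1 ((hPiff u).mp hpu))
              (fun hqu => hu.2 ((hQiff u).mp hqu))).symm
          exact continuousAt_id.congr
            (Filter.eventuallyEq_of_mem (hWopen.mem_nhds hzW) heq)
    refine ⟨Homeomorph.mk hinv.toPerm hcont hcont, ?_, ?_, ?_⟩
    · show f a = b
      apply Omega1.toOrdinal_injective
      rw [hfP a hPa, ← hμadd, Ordinal.add_sub_cancel, hνadd]
    · show f b = a
      apply Omega1.toOrdinal_injective
      rw [hfQ b hQb, ← hνadd, Ordinal.add_sub_cancel, hμadd]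
    · intro z hz
      show f z = z
      exact hfid z (hPT z hz) (hQT z hz)
/-! ### Approximating a level-preserving permutation by homeomorphisms -/

theorem exists_homeo_agree (σ : Equiv.Perm Omega1)
    (hσ : ∀ (x : Omega1) (β : Ordinal), x ∈ LevelD β → σ x ∈ LevelD β)
    (F : Finset Omega1) : ∃ g : Omega1 ≃ₜ Omega1, ∀ x ∈ F, g x = σ x := by
  classical
  induction F using Finset.induction_on with
  | empty => exact ⟨Homeomorph.refl _, by simp⟩
  | @insert x F hx ih =>
    obtain ⟨h, hh⟩ := ih
    by_cases heq : h x = σ x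
    · refine ⟨h, fun y hy => ?_⟩
      rcases Finset.mem_insert.mp hy with rfl | hy
      · exact heq
      · exact hh y hy
    · obtain ⟨β, hβΩ, hxL⟩ := exists_levelD x
      have haL : h x ∈ LevelD β := mem_levelD_homeo hxL
      have hbL : σ x ∈ LevelD β := hσ x β hxL
      set T := F.image (fun y => σ y) with hT
      have haT : h x ∉ T := by
        intro hmem
        rw [hT, Finset.mem_image] at hmem
        obtain ⟨y, hyF, hy⟩ := hmem
        rw [← hh y hyF] at hy
        exact hx (h.injective hy ▸ hyF)
      have hbT : σ x ∉ T := by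
        intro hmem
        rw [hT, Finset.mem_image] at hmem
        obtain ⟨y, hyF, hy⟩ := hmem
        exact hx (σ.injective hy ▸ hyF)
      obtain ⟨t, ht1, ht2, ht3⟩ := exists_swap_homeo heq haL hbL T haT hbT
      refine ⟨h.trans t, fun y hy => ?_⟩
      rcases Finset.mem_insert.mp hy with rfl | hy
      · exact ht1
      · show t (h y) = σ y
        rw [hh y hy]
        exact ht3 (σ y) (Finset.mem_image_of_mem _ hy)

theorem mem_closure_of_levels {σ : Equiv.Perm Omega1}
    (hσ : ∀ (x : Omega1) (β : Ordinal), x ∈ LevelD β → σ x ∈ LevelD β) :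
    σ ∈ closure (Set.range fun g : Omega1 ≃ₜ Omega1 => g.toEquiv) := by
  rw [mem_closure_iff]
  intro U hU hσU
  obtain ⟨V, hV, rfl⟩ :=
    (@isOpen_induced_iff (Equiv.Perm Omega1) (Omega1 → Omega1)
      (@Pi.topologicalSpace Omega1 (fun _ => Omega1) (fun _ => ⊥)) U
      (fun τ : Equiv.Perm Omega1 => (τ : Omega1 → Omega1))).mp hU
  obtain ⟨I, u, hu, hsub⟩ :=
    ((@isOpen_pi_iff Omega1 (fun _ => Omega1) (fun _ => ⊥) V).mp hV) _ hσU
  obtain ⟨g, hg⟩ := exists_homeo_agree σ hσ I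
  refine ⟨g.toEquiv, ?_, ⟨g, rfl⟩⟩
  show (fun x => g.toEquiv x) ∈ V
  apply hsub
  intro y hy
  have h1 : g y = σ y := hg y hy
  show g y ∈ u y
  rw [h1]
  exact (hu y hy).2
/-! ### Universe invariance of `CBderiv` -/

universe u v

theorem CBderiv_lift {X : Type*} [TopologicalSpace X] : ∀ β : Ordinal.{u},
    CBderiv X (Ordinal.lift.{v} β) = CBderiv X β := by
  intro β
  induction β using Ordinal.induction with
  | _ β ih =>
    rcases Ordinal.zero_or_succ_or_isSuccLimit β with rfl | ⟨δ, rfl⟩ | hlim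
    · rw [Ordinal.lift_zero, CBderiv_zero, CBderiv_zero]
    · rw [Ordinal.lift_succ, ← Ordinal.add_one_eq_succ, ← Ordinal.add_one_eq_succ,
        CBderiv_succ, CBderiv_succ, ih δ (by rw [← Ordinal.add_one_eq_succ]; exact lt_add_one δ)]
    · have hlim' : Order.IsSuccLimit (Ordinal.lift.{v} β) := Ordinal.isSuccLimit_lift.mpr hlim
      rw [CBderiv_limit X hlim', CBderiv_limit X hlim]
      apply Set.Subset.antisymm
      · intro x hx
        simp only [Set.mem_iInter] at hx ⊢
        intro γ hγ
        have h := hx (Ordinal.lift.{v} γ) (Ordinal.lift_lt.mpr hγ)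
        rwa [ih γ hγ] at h
      · intro x hx
        simp only [Set.mem_iInter] at hx ⊢
        intro γ hγ
        obtain ⟨γ₀, rfl⟩ := Ordinal.mem_range_lift_of_le hγ.le
        rw [ih γ₀ (Ordinal.lift_lt.mp hγ)]
        exact hx γ₀ (Ordinal.lift_lt.mp hγ)

theorem omega1_lift : (Ordinal.omega 1 : Ordinal.{u}) = Ordinal.lift.{u, 0} (Ordinal.omega 1) := by
  rw [Ordinal.lift_omega, Ordinal.lift_one]

theorem lift_add_one (β : Ordinal.{0}) :
    Ordinal.lift.{u} β + 1 = Ordinal.lift.{u} (β + 1) := by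
  rw [Ordinal.lift_add, Ordinal.lift_one]

theorem level_eq' {β : Ordinal.{u}} (hβ : β < Ordinal.omega 1)
    {β₀ : Ordinal.{0}} (h : Ordinal.lift.{u} β₀ = β) :
    CBderiv Omega1 β \ CBderiv Omega1 (β + 1) = LevelD β₀ := by
  rw [← h, _root_.lift_add_one, CBderiv_lift, CBderiv_lift, level_eq]
/-- The closure of `Homeo(ω₁)` in `Sym(ω₁)` is exactly the set of permutations
preserving every Cantor–Bendixson level `Y^(β) = ω₁^(β) \ ω₁^(β+1)`, i.e. the
direct product of the full symmetric groups of the levels; moreover each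
factor is isomorphic to `Sym(ℵ₁)`. -/
theorem closure_homeoOmega1_in_sym :
    closure (Set.range fun g : Omega1 ≃ₜ Omega1 => g.toEquiv) =
      {σ : Equiv.Perm Omega1 | ∀ β : Ordinal, β < Ordinal.omega 1 →
        (fun x => σ x) '' (CBderiv Omega1 β \ CBderiv Omega1 (β + 1)) =
          CBderiv Omega1 β \ CBderiv Omega1 (β + 1)} ∧
    ∀ β : Ordinal, β < Ordinal.omega 1 →
      Nonempty (Equiv.Perm ↥(CBderiv Omega1 β \ CBderiv Omega1 (β + 1)) ≃*
        Equiv.Perm Omega1) := by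
  constructor
  · apply Set.Subset.antisymm
    · intro σ hσ β hβ
      obtain ⟨β₀, hβ₀⟩ := Ordinal.mem_range_lift_of_le (omega1_lift ▸ hβ.le)
      rw [level_eq' hβ hβ₀]
      exact closure_subset_levels hσ β₀
    · intro σ hσ
      apply mem_closure_of_levels
      intro x β hx
      obtain ⟨δ, hδΩ, hδ⟩ := exists_levelD x
      have hβδ : β = δ := levelD_unique hx hδ
      subst hβδ
      have hβu : (Ordinal.lift.{u_1} β : Ordinal.{u_1}) < Ordinal.omega 1 := by
        rw [omega1_lift]
        exact Ordinal.lift_lt.mpr hδΩ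
      have himg := hσ (Ordinal.lift.{u_1} β) hβu
      rw [level_eq' hβu rfl] at himg
      rw [← himg]
      exact ⟨x, hδ, rfl⟩
  · intro β hβ
    obtain ⟨β₀, hβ₀⟩ := Ordinal.mem_range_lift_of_le (omega1_lift ▸ hβ.le)
    rw [level_eq' hβ hβ₀]
    refine levelD_perm_mulEquiv ?_
    rw [omega1_lift, ← hβ₀, Ordinal.lift_lt] at hβ
    exact hβ
end
end

section
/- For any set X, the symmetric group Sym(X), endowed with the topology of pointwise convergence, is a Baire space. -/
theorem symmetricGroup_baire_aux (X : Type*) :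
    @BaireSpace (Equiv.Perm X)
      (TopologicalSpace.induced (fun σ : Equiv.Perm X => (σ : X → X))
        (@Pi.topologicalSpace X (fun _ => X) (fun _ => ⊥))) := by
  classical
  letI : TopologicalSpace X := ⊥
  haveI : DiscreteTopology X := ⟨rfl⟩
  letI : TopologicalSpace (Equiv.Perm X) :=
    TopologicalSpace.induced (fun σ : Equiv.Perm X => (σ : X → X)) Pi.topologicalSpace
  constructor
  intro f ho hd
  -- basic open sets: prescribe values on a finite set
  set B : Equiv.Perm X → Finset X → Set (Equiv.Perm X) :=
    fun σ F => {τ | ∀ x ∈ F, τ x = σ x} with hB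
  have hBopen : ∀ σ F, IsOpen (B σ F) := by
    intro σ F
    have : B σ F = (fun τ : Equiv.Perm X => (τ : X → X)) ⁻¹'
        (Set.pi (F : Set X) (fun x => {σ x})) := by
      ext τ; simp [Set.mem_pi, hB]
    rw [this]
    exact (isOpen_set_pi F.finite_toSet (fun i _ => isOpen_discrete _)).preimage
      continuous_induced_dom
  have hBmem : ∀ σ F, σ ∈ B σ F := fun σ F x _ => rfl
  have hBsub : ∀ (U : Set (Equiv.Perm X)) σ, IsOpen U → σ ∈ U →
      ∃ F : Finset X, B σ F ⊆ U := by
    intro U σ hU hσ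
    obtain ⟨V, hV, rfl⟩ := isOpen_induced_iff.mp hU
    obtain ⟨I, u, hu, hsub⟩ := isOpen_pi_iff.mp hV _ hσ
    refine ⟨I, fun τ hτ => hsub (fun i hi => ?_)⟩
    show (τ : X → X) i ∈ u i
    rw [hτ i hi]
    exact (hu i hi).2
  rw [dense_iff_inter_open]
  rintro W hW ⟨σ₀, hσ₀⟩
  obtain ⟨F₀, hF₀⟩ := hBsub W σ₀ hW hσ₀
  -- close a finite set under σ and σ⁻¹ (one step)
  set G : Equiv.Perm X → Finset X → Finset X :=
    fun σ F => (F ∪ F.image σ) ∪ F.image σ.symm with hG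
  have hFG : ∀ σ F, F ⊆ G σ F := fun σ F =>
    Finset.Subset.trans Finset.subset_union_left Finset.subset_union_left
  have step : ∀ (n : ℕ) (σ : Equiv.Perm X) (F : Finset X),
      ∃ σ' : Equiv.Perm X, ∃ F' : Finset X,
        (∀ x ∈ G σ F, σ' x = σ x) ∧ G σ F ⊆ F' ∧ B σ' F' ⊆ f n := by
    intro n σ F
    obtain ⟨σ', hσ'⟩ := (hd n).inter_open_nonempty _ (hBopen σ (G σ F)) ⟨σ, hBmem _ _⟩
    obtain ⟨F'', hF''⟩ := hBsub (f n) σ' (ho n) hσ'.2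
    refine ⟨σ', F'' ∪ G σ F, hσ'.1, Finset.subset_union_right, ?_⟩
    exact fun τ hτ => hF'' (fun x hx => hτ x (Finset.mem_union_left _ hx))
  choose g1 g2 hstep1 hstep2 hstep3 using step
  set seq : ℕ → Equiv.Perm X × Finset X :=
    fun n => Nat.rec ((σ₀, F₀) : Equiv.Perm X × Finset X)
      (fun n p => (g1 n p.1 p.2, g2 n p.1 p.2)) n with hseq
  set s : ℕ → Equiv.Perm X := fun n => (seq n).1 with hs
  set Fn : ℕ → Finset X := fun n => (seq n).2 with hFn
  have F0 : Fn 0 = F₀ := rfl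
  have sS : ∀ n, s (n + 1) = g1 n (s n) (Fn n) := fun n => rfl
  have FS : ∀ n, Fn (n + 1) = g2 n (s n) (Fn n) := fun n => rfl
  have hGFn : ∀ n, G (s n) (Fn n) ⊆ Fn (n + 1) := by
    intro n; rw [FS]; exact hstep2 n (s n) (Fn n)
  have hmono : ∀ n, Fn n ⊆ Fn (n + 1) := fun n => (hFG _ _).trans (hGFn n)
  have hmono' : ∀ m n, m ≤ n → Fn m ⊆ Fn n := by
    intro m n h
    induction h with
    | refl => exact Finset.Subset.refl _
    | step _ ih => exact ih.trans (hmono _)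
  have hagree : ∀ n x, x ∈ G (s n) (Fn n) → s (n + 1) x = s n x := by
    intro n x hx; rw [sS]; exact hstep1 n (s n) (Fn n) x hx
  have hconsist : ∀ n m, n ≤ m → ∀ x ∈ Fn n, s m x = s n x := by
    intro n m h
    induction h with
    | refl => intro x _; rfl
    | @step k h ih =>
        intro x hx
        have hxk : x ∈ Fn k := hmono' n k h hx
        rw [hagree k x (hFG _ _ hxk), ih x hx]
  have hBn : ∀ n, B (s (n + 1)) (Fn (n + 1)) ⊆ f n := by
    intro n; rw [sS, FS]; exact hstep3 n (s n) (Fn n)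
  -- the limit function
  set t : X → X := fun x => if h : ∃ n, x ∈ Fn n then s (Nat.find h) x else x with ht
  have tspec : ∀ n x, x ∈ Fn n → t x = s n x := by
    intro n x hx
    have h : ∃ k, x ∈ Fn k := ⟨n, hx⟩
    have h2 : s n x = s (Nat.find h) x :=
      hconsist (Nat.find h) n (Nat.find_min' h hx) x (Nat.find_spec h)
    simp only [ht, dif_pos h]
    exact h2.symm
  have tneg : ∀ x, ¬(∃ n, x ∈ Fn n) → t x = x := by
    intro x hx; simp only [ht, dif_neg hx]
  have tmapsS : ∀ x, (∃ n, x ∈ Fn n) → ∃ n, t x ∈ Fn n := by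
    rintro x ⟨n, hx⟩
    refine ⟨n + 1, ?_⟩
    rw [tspec n x hx]
    refine hGFn n ?_
    exact Finset.mem_union_left _ (Finset.mem_union_right _ (Finset.mem_image_of_mem _ hx))
  have tinj : Function.Injective t := by
    intro x y hxy
    by_cases hx : ∃ n, x ∈ Fn n <;> by_cases hy : ∃ n, y ∈ Fn n
    · obtain ⟨a, ha⟩ := hx; obtain ⟨b, hb⟩ := hy
      have hxa : x ∈ Fn (max a b) := hmono' a _ (le_max_left a b) ha
      have hyb : y ∈ Fn (max a b) := hmono' b _ (le_max_right a b) hb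
      rw [tspec _ x hxa, tspec _ y hyb] at hxy
      exact (s (max a b)).injective hxy
    · exfalso
      have h1 := tmapsS x hx
      rw [hxy, tneg y hy] at h1
      exact hy h1
    · exfalso
      have h1 := tmapsS y hy
      rw [← hxy, tneg x hx] at h1
      exact hx h1
    · rw [tneg x hx, tneg y hy] at hxy; exact hxy
  have tsurj : Function.Surjective t := by
    intro y
    by_cases hy : ∃ n, y ∈ Fn n
    · obtain ⟨n, hn⟩ := hy
      refine ⟨(s n).symm y, ?_⟩
      have hxG : (s n).symm y ∈ G (s n) (Fn n) :=
        Finset.mem_union_right _ (Finset.mem_image_of_mem _ hn)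
      have hxF : (s n).symm y ∈ Fn (n + 1) := hGFn n hxG
      rw [tspec (n + 1) _ hxF, hagree n _ hxG]
      exact (s n).apply_symm_apply y
    · exact ⟨y, tneg y hy⟩
  refine ⟨Equiv.ofBijective t ⟨tinj, tsurj⟩, hF₀ ?_, Set.mem_iInter.mpr fun n => hBn n ?_⟩
  · intro x hx
    show t x = σ₀ x
    exact tspec 0 x (F0 ▸ hx)
  · intro x hx
    show t x = s (n + 1) x
    exact tspec (n + 1) x hx

/-- For any set `X`, the symmetric group `Sym(X)` with the topology of
pointwise convergence (for `X` discrete) is a Baire space. -/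
theorem symmetricGroup_baireSpace (X : Type*) :
    letI : TopologicalSpace (Equiv.Perm X) :=
      TopologicalSpace.induced (fun σ : Equiv.Perm X => (σ : X → X))
        (@Pi.topologicalSpace X (fun _ => X) (fun _ => ⊥))
    BaireSpace (Equiv.Perm X) := by
  exact symmetricGroup_baire_aux X
end

section
/- Let T be a regular tree in which every vertex has uncountably many neighbours, and let G = Aut⁺(T) be the subgroup of Aut(T) generated by the fixators of edges, with the topology of pointwise convergence on vertices. Then every continuous homomorphism from G to a metrisable topological group is trivial, while G has unbounded orbits for its isometric action on the vertex set of T. -/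
open SimpleGraph

namespace ATaux

variable {V : Type*} {T : SimpleGraph V}

attribute [local instance] Classical.propDecidable

noncomputable section

lemma exists_parent (hc : T.Connected) {v w : V} (h : v ≠ w) :
    ∃ p, T.Adj v p ∧ T.dist p w + 1 = T.dist v w := by
  obtain ⟨q, hq⟩ := hc.exists_walk_length_eq_dist v w
  have hpos : 0 < T.dist v w := hc.pos_dist_of_ne h
  cases q with
  | nil => simp at hq; simp at hpos
  | cons hadj q' =>
    rename_i b
    refine ⟨b, hadj, ?_⟩
    have h1 : T.dist b w ≤ q'.length := T.dist_le q'
    have h2 : T.dist v w ≤ T.dist v b + T.dist b w := hc.dist_triangle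
    have h3 : T.dist v b ≤ 1 := by
      simpa using T.dist_le (Walk.cons hadj Walk.nil)
    simp only [Walk.length_cons] at hq
    omega

/-- parent of `v` in the tree rooted at `w`. -/
def parent (T : SimpleGraph V) (w v : V) : V :=
  if h : ∃ p, T.Adj v p ∧ T.dist p w + 1 = T.dist v w then h.choose else v

lemma parent_spec (hc : T.Connected) {v w : V} (h : v ≠ w) :
    T.Adj v (parent T w v) ∧ T.dist (parent T w v) w + 1 = T.dist v w := by
  have he := exists_parent hc h
  rw [parent, dif_pos he]
  exact he.choose_spec

lemma parent_unique (hT : T.IsTree) {v w p p' : V} (hadj : T.Adj v p) (hadj' : T.Adj v p')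
    (hd : T.dist p w + 1 = T.dist v w) (hd' : T.dist p' w + 1 = T.dist v w) : p = p' := by
  classical
  obtain ⟨q, hq⟩ := (hT.isConnected).exists_walk_length_eq_dist p w
  obtain ⟨q', hq'⟩ := (hT.isConnected).exists_walk_length_eq_dist p' w
  have hp : (Walk.cons hadj q).IsPath := by
    apply Walk.isPath_of_length_eq_dist
    simp [hq, hd]
  have hp' : (Walk.cons hadj' q').IsPath := by
    apply Walk.isPath_of_length_eq_dist
    simp [hq', hd']
  obtain ⟨P, -, hPu⟩ := hT.existsUnique_path v w
  have e1 := hPu _ hp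
  have e2 := hPu _ hp'
  have : Walk.cons hadj q = Walk.cons hadj' q' := by rw [e1, e2]
  have h1 : (Walk.cons hadj q).getVert 1 = p :=
    (Walk.getVert_cons_succ (n := 0) _ _).trans (Walk.getVert_zero _)
  have h2 : (Walk.cons hadj' q').getVert 1 = p' :=
    (Walk.getVert_cons_succ (n := 0) _ _).trans (Walk.getVert_zero _)
  rw [← h1, ← h2, this]

lemma parent_eq (hT : T.IsTree) {v w p : V} (hadj : T.Adj v p)
    (hd : T.dist p w + 1 = T.dist v w) : parent T w v = p := by
  have hvw : v ≠ w := by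
    rintro rfl
    rw [(hT.isConnected).dist_eq_zero_iff.2 rfl] at hd; omega
  obtain ⟨h1, h2⟩ := parent_spec hT.isConnected hvw
  exact parent_unique hT h1 hadj h2 hd

lemma adj_dist_ne (hT : T.IsTree) {a b : V} (hadj : T.Adj a b) (w : V) :
    T.dist a w ≠ T.dist b w := by
  intro heq
  obtain ⟨p, hp⟩ := (hT.isConnected).exists_walk_length_eq_dist a w
  obtain ⟨q, hq⟩ := (hT.isConnected).exists_walk_length_eq_dist b w
  have hbp : b ∉ p.support := by
    intro hb
    have hsplit := p.take_spec hb
    have hlen : (p.takeUntil b hb).length + (p.dropUntil b hb).length = p.length := by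
      conv_rhs => rw [← hsplit]
      rw [Walk.length_append]
    have h1 : T.dist b w ≤ (p.dropUntil b hb).length := T.dist_le _
    have h2 : T.dist a b ≤ (p.takeUntil b hb).length := T.dist_le _
    have h3 : T.dist a b = 1 := SimpleGraph.dist_eq_one_iff_adj.2 hadj
    omega
  have hpath : (Walk.cons (hadj.symm) p).IsPath := by
    refine Walk.IsPath.cons ?_ hbp
    exact Walk.isPath_of_length_eq_dist p hp
  have hqpath : q.IsPath := Walk.isPath_of_length_eq_dist q hq
  obtain ⟨P, -, hPu⟩ := hT.existsUnique_path b w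
  have e1 := hPu _ hpath
  have e2 := hPu _ hqpath
  have : (Walk.cons hadj.symm p).length = q.length := by rw [e1, e2]
  simp only [Walk.length_cons] at this
  omega

lemma adj_dist_cases (hT : T.IsTree) {a b : V} (hadj : T.Adj a b) (w : V) :
    T.dist b w + 1 = T.dist a w ∨ T.dist a w + 1 = T.dist b w := by
  have h1 : T.dist a w ≤ T.dist a b + T.dist b w := (hT.isConnected).dist_triangle
  have h2 : T.dist b w ≤ T.dist b a + T.dist a w := (hT.isConnected).dist_triangle
  have h3 : T.dist a b = 1 := SimpleGraph.dist_eq_one_iff_adj.2 hadj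
  have h4 : T.dist b a = 1 := SimpleGraph.dist_eq_one_iff_adj.2 hadj.symm
  have h5 := adj_dist_ne hT hadj w
  omega

/-- the neighbour of the root `w` in whose branch `v` lies. -/
def branch (T : SimpleGraph V) (w v : V) : V := (parent T w)^[T.dist v w - 1] v

lemma parent_iterate_spec (hc : T.Connected) (w v : V) :
    ∀ k, k ≤ T.dist v w →
      T.dist ((parent T w)^[k] v) w = T.dist v w - k ∧ T.dist v ((parent T w)^[k] v) ≤ k := by
  intro k
  induction k with
  | zero => simp
  | succ k ih =>
    intro hk
    obtain ⟨ih1, ih2⟩ := ih (by omega)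
    have hzw : (parent T w)^[k] v ≠ w := by
      intro h
      rw [h, (hc).dist_eq_zero_iff.2 rfl] at ih1
      omega
    obtain ⟨had, hdd⟩ := parent_spec hc hzw
    rw [Function.iterate_succ_apply']
    have h1 : T.dist (parent T w ((parent T w)^[k] v)) w = T.dist v w - (k+1) := by omega
    refine ⟨h1, ?_⟩
    have h2 : T.dist ((parent T w)^[k] v) (parent T w ((parent T w)^[k] v)) = 1 :=
      SimpleGraph.dist_eq_one_iff_adj.2 had
    have h3 := hc.dist_triangle (u := v) (v := (parent T w)^[k] v)
      (w := parent T w ((parent T w)^[k] v))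
    omega

lemma branch_dist (hc : T.Connected) {v w : V} (h : v ≠ w) :
    T.dist (branch T w v) w = 1 ∧ T.dist v (branch T w v) + 1 = T.dist v w := by
  have hd : 1 ≤ T.dist v w := hc.pos_dist_of_ne h
  obtain ⟨h1, h2⟩ := parent_iterate_spec hc w v (T.dist v w - 1) (by omega)
  rw [branch]
  refine ⟨by omega, ?_⟩
  have h3 : T.dist v w ≤ T.dist v ((parent T w)^[T.dist v w - 1] v) +
      T.dist ((parent T w)^[T.dist v w - 1] v) w := hc.dist_triangle
  omega

lemma branch_adj (hc : T.Connected) {v w : V} (h : v ≠ w) : T.Adj w (branch T w v) := by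
  have := (branch_dist hc h).1
  rw [← SimpleGraph.dist_eq_one_iff_adj, T.dist_comm]
  exact this

lemma branch_of_dist_one {v w : V} (h : T.dist v w = 1) : branch T w v = v := by
  simp [branch, h]

lemma branch_parent (hc : T.Connected) {v w : V} (h2 : 2 ≤ T.dist v w) :
    branch T w (parent T w v) = branch T w v := by
  have hvw : v ≠ w := by rintro rfl; rw [(hc).dist_eq_zero_iff.2 rfl] at h2; omega
  obtain ⟨-, hdd⟩ := parent_spec hc hvw
  rw [branch, branch]
  have h3 : T.dist v w - 1 = (T.dist (parent T w v) w - 1) + 1 := by omega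
  rw [h3, Function.iterate_succ_apply]

lemma branch_eq_of_adj (hT : T.IsTree) {a b w : V} (hadj : T.Adj a b)
    (ha : a ≠ w) (hb : b ≠ w) : branch T w a = branch T w b := by
  rcases adj_dist_cases hT hadj w with h | h
  · have hpar : parent T w a = b := parent_eq hT hadj h
    have h2 : 2 ≤ T.dist a w := by
      have : 1 ≤ T.dist b w := (hT.isConnected).pos_dist_of_ne hb
      omega
    rw [← hpar, branch_parent hT.isConnected h2]
  · have hpar : parent T w b = a := parent_eq hT hadj.symm h
    have h2 : 2 ≤ T.dist b w := by
      have : 1 ≤ T.dist a w := (hT.isConnected).pos_dist_of_ne ha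
      omega
    rw [← hpar, branch_parent hT.isConnected h2]

lemma root_mem_of_branch_ne (hT : T.IsTree) {a b w : V} (p : T.Walk a b)
    (ha : a ≠ w) (hb : b ≠ w) (hne : branch T w a ≠ branch T w b) : w ∈ p.support := by
  induction p with
  | nil => exact absurd rfl hne
  | cons hadj q ih =>
    rename_i x y z
    by_cases hy : y = w
    · subst hy; simp [Walk.support_cons]
    · have := branch_eq_of_adj hT hadj ha hy
      rw [Walk.support_cons, List.mem_cons]
      exact Or.inr (ih hy hb (by rw [← this]; exact hne))

lemma dist_add_of_branch_ne (hT : T.IsTree) {a b w : V}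
    (ha : a ≠ w) (hb : b ≠ w) (hne : branch T w a ≠ branch T w b) :
    T.dist a w + T.dist w b ≤ T.dist a b := by
  obtain ⟨p, hp⟩ := (hT.isConnected).exists_walk_length_eq_dist a b
  have hw : w ∈ p.support := root_mem_of_branch_ne hT p ha hb hne
  have hsplit := p.take_spec hw
  have hlen : (p.takeUntil w hw).length + (p.dropUntil w hw).length = p.length := by
    conv_rhs => rw [← hsplit]; rw [Walk.length_append]
  have h1 : T.dist a w ≤ (p.takeUntil w hw).length := T.dist_le _
  have h2 : T.dist w b ≤ (p.dropUntil w hw).length := T.dist_le _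
  omega

lemma dist_branch_lt (hc : T.Connected) {w u z : V} (hz : z ≠ w)
    (hbz : branch T w z = u) : T.dist z u + 1 = T.dist z w := by
  have := (branch_dist hc hz).2
  rwa [hbz] at this

lemma dist_branch_gt (hT : T.IsTree) {w u : V} (hu : T.Adj w u) {z : V} (hz : z ≠ w)
    (hbz : branch T w z ≠ u) : T.dist z u = T.dist z w + 1 := by
  have huw : u ≠ w := hu.ne'
  have hbu : branch T w u = u := branch_of_dist_one (SimpleGraph.dist_eq_one_iff_adj.2 hu.symm)
  have hne : branch T w z ≠ branch T w u := by rw [hbu]; exact hbz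
  have h1 := dist_add_of_branch_ne hT hz huw hne
  have h2 : T.dist w u = 1 := SimpleGraph.dist_eq_one_iff_adj.2 hu
  have h3 : T.dist z u ≤ T.dist z w + T.dist w u := (hT.isConnected).dist_triangle
  omega

lemma mem_D_iff (hT : T.IsTree) {w u : V} (hu : T.Adj w u) (z : V) :
    T.dist z u < T.dist z w ↔ (z ≠ w ∧ branch T w z = u) := by
  by_cases hz : z = w
  · have h1 : T.dist w u = 1 := SimpleGraph.dist_eq_one_iff_adj.2 hu
    have h2 : T.dist w w = 0 := (hT.isConnected).dist_eq_zero_iff.2 rfl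
    simp only [hz]
    simp [h1, h2]
  · constructor
    · intro h
      refine ⟨hz, ?_⟩
      by_contra hne
      have := dist_branch_gt hT hu hz hne
      omega
    · rintro ⟨-, hbz⟩
      have := dist_branch_lt hT.isConnected hz hbz
      omega

lemma dist_perm_le (σ : Equiv.Perm V) (hσ : ∀ a b, T.Adj (σ a) (σ b) ↔ T.Adj a b)
    (hc : T.Connected) (a b : V) : T.dist (σ a) (σ b) ≤ T.dist a b := by
  obtain ⟨p, hp⟩ := hc.exists_walk_length_eq_dist a b
  let f : T →g T := ⟨σ, fun h => (hσ _ _).mpr h⟩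
  have := T.dist_le (p.map f)
  rwa [Walk.length_map, hp] at this

lemma dist_perm (hc : T.Connected) (σ : Equiv.Perm V)
    (hσ : ∀ a b, T.Adj (σ a) (σ b) ↔ T.Adj a b) (a b : V) :
    T.dist (σ a) (σ b) = T.dist a b := by
  refine le_antisymm (dist_perm_le σ hσ hc a b) ?_
  have hσ' : ∀ a b, T.Adj (σ⁻¹ a) (σ⁻¹ b) ↔ T.Adj a b := by
    intro a b
    conv_rhs => rw [← σ.apply_symm_apply a, ← σ.apply_symm_apply b]
    exact (hσ _ _).symm
  have := dist_perm_le σ⁻¹ hσ' hc (σ a) (σ b)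
  simpa using this

section equivs

variable (hreg : ∀ u v : V, Nonempty (T.neighborSet u ≃ T.neighborSet v))

noncomputable def raw (a b : V) : T.neighborSet a ≃ T.neighborSet b := (hreg a b).some

noncomputable def mkE (a p b q : V) : T.neighborSet a ≃ T.neighborSet b :=
  if h : p ∈ T.neighborSet a ∧ q ∈ T.neighborSet b then
    (raw hreg a b).trans (Equiv.swap ((raw hreg a b) ⟨p, h.1⟩) ⟨q, h.2⟩)
  else raw hreg a b

lemma mkE_marked {a p b q : V} (hp : p ∈ T.neighborSet a) (hq : q ∈ T.neighborSet b) :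
    ((mkE hreg a p b q) ⟨p, hp⟩ : V) = q := by
  rw [mkE, dif_pos ⟨hp, hq⟩]
  simp [Equiv.swap_apply_left]

noncomputable def symE (a p b q : V) : T.neighborSet a ≃ T.neighborSet b :=
  if WellOrderingRel (α := V × V) (a, p) (b, q) then mkE hreg a p b q
  else (mkE hreg b q a p).symm

lemma symE_symm {a p b q : V} (h : (a, p) ≠ (b, q)) :
    symE hreg b q a p = (symE hreg a p b q).symm := by
  rcases trichotomous_of (WellOrderingRel (α := V × V)) (a, p) (b, q) with h1 | h1 | h1
  · have h2 : ¬ WellOrderingRel (α := V × V) (b, q) (a, p) :=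
      (IsWellFounded.wf (r := WellOrderingRel (α := V × V))).asymmetric _ _ h1
    rw [symE, symE, if_pos h1, if_neg h2]
  · exact absurd h1 h
  · have h2 : ¬ WellOrderingRel (α := V × V) (a, p) (b, q) :=
      (IsWellFounded.wf (r := WellOrderingRel (α := V × V))).asymmetric _ _ h1
    rw [symE, symE, if_pos h1, if_neg h2, Equiv.symm_symm]

lemma symE_marked {a p b q : V} (hp : p ∈ T.neighborSet a) (hq : q ∈ T.neighborSet b) :
    ((symE hreg a p b q) ⟨p, hp⟩ : V) = q := by
  rw [symE]
  split_ifs with h1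
  · exact mkE_marked hreg hp hq
  · have : (mkE hreg b q a p) ⟨q, hq⟩ = ⟨p, hp⟩ :=
      Subtype.ext (mkE_marked hreg hq hp)
    rw [← this, Equiv.symm_apply_apply]

noncomputable def swp (w u x v : V) : V :=
  if T.dist v w = 1 then (if v = u then x else if v = x then u else v)
  else if hg : (branch T w v = u ∨ branch T w v = x) ∧ 2 ≤ T.dist v w then
    (if ha : T.Adj (parent T w v) v ∧ T.dist (parent T w v) w + 1 = T.dist v w ∧
        T.dist (parent T w (parent T w v)) w + 2 = T.dist v w then
      (symE hreg (parent T w v) (parent T w (parent T w v))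
        (swp w u x (parent T w v)) (swp w u x (parent T w (parent T w v)))
        ⟨v, ha.1⟩ : V)
    else v)
  else v
termination_by T.dist v w
decreasing_by
  · omega
  · omega

lemma swp_eq_base {w u x v : V} (hd : T.dist v w = 1) :
    swp hreg w u x v = if v = u then x else if v = x then u else v := by
  rw [swp, if_pos hd]

lemma swp_eq_step {w u x v : V} (hn1 : T.dist v w ≠ 1)
    (hbr : branch T w v = u ∨ branch T w v = x) (h2 : 2 ≤ T.dist v w)
    (hA : T.Adj (parent T w v) v) (hB : T.dist (parent T w v) w + 1 = T.dist v w)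
    (hC : T.dist (parent T w (parent T w v)) w + 2 = T.dist v w) :
    swp hreg w u x v = (symE hreg (parent T w v) (parent T w (parent T w v))
      (swp hreg w u x (parent T w v)) (swp hreg w u x (parent T w (parent T w v)))
      ⟨v, hA⟩ : V) := by
  rw [swp, if_neg hn1, dif_pos ⟨hbr, h2⟩, dif_pos ⟨hA, hB, hC⟩]

lemma swp_eq_step' {w u x v : V} (hn1 : T.dist v w ≠ 1)
    (hbr : branch T w v = u ∨ branch T w v = x) (h2 : 2 ≤ T.dist v w)
    {A P : V} (hAeq : parent T w v = A) (hPeq : parent T w A = P)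
    (hA : T.Adj A v) (hB : T.dist A w + 1 = T.dist v w)
    (hC : T.dist P w + 2 = T.dist v w) :
    swp hreg w u x v = (symE hreg A P
      (swp hreg w u x A) (swp hreg w u x P) ⟨v, hA⟩ : V) := by
  subst hAeq
  subst hPeq
  exact swp_eq_step hreg hn1 hbr h2 hA hB hC

lemma swp_fix {w u x v : V}
    (h : T.dist v w = 0 ∨ (branch T w v ≠ u ∧ branch T w v ≠ x)) :
    swp hreg w u x v = v := by
  rw [swp]
  rcases h with h | h
  · rw [if_neg (by omega), dif_neg (by omega)]
  · by_cases hd : T.dist v w = 1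
    · have hb := branch_of_dist_one (T := T) (w := w) hd
      rw [hb] at h
      rw [if_pos hd, if_neg h.1, if_neg h.2]
    · rw [if_neg hd, dif_neg (by tauto)]

lemma swp_root {w u x : V} : swp hreg w u x w = w :=
  swp_fix hreg (Or.inl (by simp))

lemma swp_main (hT : T.IsTree) {w u x : V} (hu : T.Adj w u) (hx : T.Adj w x)
    (hux : u ≠ x) (n : ℕ) :
    ∀ v, T.dist v w = n → 1 ≤ n → (branch T w v = u ∨ branch T w v = x) →
      swp hreg w u x v ≠ w ∧ T.dist (swp hreg w u x v) w = n ∧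
      (branch T w v = u → branch T w (swp hreg w u x v) = x) ∧
      (branch T w v = x → branch T w (swp hreg w u x v) = u) ∧
      swp hreg w u x (swp hreg w u x v) = v ∧
      parent T w (swp hreg w u x v) = swp hreg w u x (parent T w v) := by
  have hc := hT.isConnected
  have hww : T.dist w w = 0 := hc.dist_eq_zero_iff.2 rfl
  induction n using Nat.strong_induction_on with
  | _ n ih =>
  intro v hv hn hbr
  rcases eq_or_lt_of_le hn with h1 | h2
  · -- base case : dist v w = 1
    have hd1 : T.dist v w = 1 := by omega
    have hbv : branch T w v = v := branch_of_dist_one hd1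
    rw [hbv] at hbr
    have hdxw : T.dist x w = 1 := SimpleGraph.dist_eq_one_iff_adj.2 hx.symm
    have hduw : T.dist u w = 1 := SimpleGraph.dist_eq_one_iff_adj.2 hu.symm
    have hparu : parent T w u = w := parent_eq hT hu.symm (by omega)
    have hparx : parent T w x = w := parent_eq hT hx.symm (by omega)
    rcases hbr with h | h
    · -- v = u
      have hs : swp hreg w u x v = x := by
        rw [swp_eq_base hreg hd1, if_pos h]
      have hs2 : swp hreg w u x x = u := by
        rw [swp_eq_base hreg hdxw, if_neg (Ne.symm hux), if_pos rfl]
      rw [hs]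
      refine ⟨hx.ne', by omega, fun _ => branch_of_dist_one hdxw, ?_, ?_, ?_⟩
      · intro hp
        rw [hbv] at hp
        exact absurd (by rw [← h, hp] : u = x) hux
      · rw [hs2, ← h]
      · rw [h, hparu, hparx, swp_root hreg]
    · -- v = x
      have hs : swp hreg w u x v = u := by
        rw [swp_eq_base hreg hd1, if_neg, if_pos h]
        rw [h]; exact Ne.symm hux
      have hs2 : swp hreg w u x u = x := by
        rw [swp_eq_base hreg hduw, if_pos rfl]
      rw [hs]
      refine ⟨hu.ne', by omega, ?_, fun _ => branch_of_dist_one hduw, ?_, ?_⟩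
      · intro hp
        rw [hbv] at hp
        exact absurd (by rw [← hp, h] : u = x) hux
      · rw [hs2, ← h]
      · rw [h, hparu, hparx, swp_root hreg]
  · -- step case : dist v w = n ≥ 2
    have hvw : v ≠ w := by intro h; rw [h, hww] at hv; omega
    obtain ⟨hadj_va, hda⟩ := parent_spec hc hvw
    have haw : parent T w v ≠ w := by
      intro h; rw [h, hww] at hda; omega
    obtain ⟨hadj_ap, hdp⟩ := parent_spec hc haw
    have hbra : branch T w (parent T w v) = branch T w v := branch_parent hc (by omega)
    obtain ⟨hsaw, hsad, hbsa1, hbsa2, hssa, hpsa⟩ :=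
      ih (n - 1) (by omega) (parent T w v) (by omega) (by omega) (by rw [hbra]; exact hbr)
    have hspa : T.dist (swp hreg w u x (parent T w (parent T w v))) w = n - 2 ∧
        swp hreg w u x (swp hreg w u x (parent T w (parent T w v))) =
          parent T w (parent T w v) := by
      by_cases hn2 : n = 2
      · have hpw : parent T w (parent T w v) = w := hc.dist_eq_zero_iff.1 (by omega)
        rw [hpw, swp_root hreg]
        exact ⟨by omega, swp_root hreg⟩
      · have hbpa : branch T w (parent T w (parent T w v)) = branch T w (parent T w v) :=
          branch_parent hc (by omega)
        have hIH2 := ih (n - 2) (by omega) (parent T w (parent T w v)) (by omega) (by omega)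
          (by rw [hbpa, hbra]; exact hbr)
        exact ⟨hIH2.2.1, hIH2.2.2.2.2.1⟩
    obtain ⟨hspa1, hspa2⟩ := hspa
    have hAv : T.Adj (parent T w v) v := hadj_va.symm
    have hsw : swp hreg w u x v = (symE hreg (parent T w v) (parent T w (parent T w v))
        (swp hreg w u x (parent T w v)) (swp hreg w u x (parent T w (parent T w v)))
        ⟨v, hAv⟩ : V) :=
      swp_eq_step hreg (by omega) hbr (by omega) hAv (by omega) (by omega)
    have hpaN : parent T w (parent T w v) ∈ T.neighborSet (parent T w v) := hadj_ap
    have hspaN : swp hreg w u x (parent T w (parent T w v)) ∈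
        T.neighborSet (swp hreg w u x (parent T w v)) := by
      have h1 := (parent_spec hc hsaw).1
      rw [hpsa] at h1
      exact h1
    have hmark : symE hreg (parent T w v) (parent T w (parent T w v))
        (swp hreg w u x (parent T w v)) (swp hreg w u x (parent T w (parent T w v)))
        ⟨parent T w (parent T w v), hpaN⟩ =
        ⟨swp hreg w u x (parent T w (parent T w v)), hspaN⟩ :=
      Subtype.ext (symE_marked hreg hpaN hspaN)
    have hsv_ne_spa : swp hreg w u x v ≠ swp hreg w u x (parent T w (parent T w v)) := by
      intro h
      have h1 : (symE hreg (parent T w v) (parent T w (parent T w v))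
          (swp hreg w u x (parent T w v)) (swp hreg w u x (parent T w (parent T w v)))
          ⟨v, hAv⟩) = ⟨swp hreg w u x (parent T w (parent T w v)), hspaN⟩ :=
        Subtype.ext (by rw [← hsw]; exact h)
      rw [← hmark] at h1
      have h2 := (symE hreg (parent T w v) (parent T w (parent T w v))
          (swp hreg w u x (parent T w v))
          (swp hreg w u x (parent T w (parent T w v)))).injective h1
      have h3 : v = parent T w (parent T w v) := congrArg Subtype.val h2
      rw [← h3] at hdp
      omega
    have hsvN : T.Adj (swp hreg w u x (parent T w v)) (swp hreg w u x v) := by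
      rw [hsw]
      exact (symE hreg (parent T w v) (parent T w (parent T w v))
        (swp hreg w u x (parent T w v)) (swp hreg w u x (parent T w (parent T w v)))
        ⟨v, hAv⟩).2
    have hdsv : T.dist (swp hreg w u x v) w = n := by
      rcases adj_dist_cases hT hsvN w with h | h
      · exfalso
        have h1 : parent T w (swp hreg w u x (parent T w v)) = swp hreg w u x v :=
          parent_eq hT hsvN (by omega)
        rw [hpsa] at h1
        exact hsv_ne_spa h1.symm
      · omega
    have hsvw : swp hreg w u x v ≠ w := by
      intro h; rw [h, hww] at hdsv; omega
    have hpar_sv : parent T w (swp hreg w u x v) = swp hreg w u x (parent T w v) :=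
      parent_eq hT hsvN.symm (by omega)
    have hbsv : branch T w (swp hreg w u x v) = branch T w (swp hreg w u x (parent T w v)) := by
      have h1 := branch_parent hc (v := swp hreg w u x v) (w := w) (by omega)
      rw [hpar_sv] at h1
      exact h1.symm
    have hsa_ne_a : swp hreg w u x (parent T w v) ≠ parent T w v := by
      intro h
      rcases hbr with hh | hh
      · have h1 := hbsa1 (by rw [hbra]; exact hh)
        rw [h, hbra, hh] at h1
        exact hux h1
      · have h1 := hbsa2 (by rw [hbra]; exact hh)
        rw [h, hbra, hh] at h1
        exact hux h1.symm
    have hbrsv : branch T w (swp hreg w u x v) = u ∨ branch T w (swp hreg w u x v) = x := by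
      rcases hbr with hh | hh
      · exact Or.inr (by rw [hbsv]; exact hbsa1 (by rw [hbra]; exact hh))
      · exact Or.inl (by rw [hbsv]; exact hbsa2 (by rw [hbra]; exact hh))
    have hswsv : swp hreg w u x (swp hreg w u x v) =
        (symE hreg (swp hreg w u x (parent T w v))
          (swp hreg w u x (parent T w (parent T w v)))
          (swp hreg w u x (swp hreg w u x (parent T w v)))
          (swp hreg w u x (swp hreg w u x (parent T w (parent T w v))))
          ⟨swp hreg w u x v, hsvN⟩ : V) :=
      swp_eq_step' hreg (by omega) hbrsv (by omega) hpar_sv hpsa hsvN (by omega) (by omega)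
    have hEsymm : symE hreg (swp hreg w u x (parent T w v))
        (swp hreg w u x (parent T w (parent T w v))) (parent T w v)
        (parent T w (parent T w v)) =
        (symE hreg (parent T w v) (parent T w (parent T w v))
          (swp hreg w u x (parent T w v))
          (swp hreg w u x (parent T w (parent T w v)))).symm := by
      refine symE_symm hreg ?_
      intro hEq
      exact hsa_ne_a (congrArg Prod.fst hEq).symm
    have hswp_swp : swp hreg w u x (swp hreg w u x v) = v := by
      rw [hswsv, hssa, hspa2, hEsymm]
      have h2 : (⟨swp hreg w u x v, hsvN⟩ :
          T.neighborSet (swp hreg w u x (parent T w v))) =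
          (symE hreg (parent T w v) (parent T w (parent T w v))
            (swp hreg w u x (parent T w v))
            (swp hreg w u x (parent T w (parent T w v)))) ⟨v, hAv⟩ :=
        Subtype.ext hsw
      rw [h2, Equiv.symm_apply_apply]
    exact ⟨hsvw, hdsv,
      fun h => by rw [hbsv]; exact hbsa1 (by rw [hbra]; exact h),
      fun h => by rw [hbsv]; exact hbsa2 (by rw [hbra]; exact h),
      hswp_swp, hpar_sv⟩

lemma swp_invol (hT : T.IsTree) {w u x : V} (hu : T.Adj w u) (hx : T.Adj w x)
    (hux : u ≠ x) : Function.Involutive (swp hreg w u x) := by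
  intro v
  by_cases h : T.dist v w = 0 ∨ (branch T w v ≠ u ∧ branch T w v ≠ x)
  · rw [swp_fix hreg h, swp_fix hreg h]
  · push_neg at h
    have hbr : branch T w v = u ∨ branch T w v = x := by
      by_cases hbu : branch T w v = u
      · exact Or.inl hbu
      · exact Or.inr (h.2 hbu)
    exact (swp_main hreg hT hu hx hux (T.dist v w) v rfl (by omega) hbr).2.2.2.2.1

lemma swp_adj_par (hT : T.IsTree) {w u x : V} (hu : T.Adj w u) (hx : T.Adj w x)
    (hux : u ≠ x) {a b : V} (hadj : T.Adj a b) (hd : T.dist b w + 1 = T.dist a w) :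
    T.Adj (swp hreg w u x a) (swp hreg w u x b) := by
  have hc := hT.isConnected
  have hww : T.dist w w = 0 := hc.dist_eq_zero_iff.2 rfl
  have hpar : parent T w a = b := parent_eq hT hadj hd
  by_cases hbr : branch T w a = u ∨ branch T w a = x
  · have hm := swp_main hreg hT hu hx hux (T.dist a w) a rfl (by omega) hbr
    have h1 := hm.2.2.2.2.2
    have h2 := (parent_spec hc hm.1).1
    rw [h1, hpar] at h2
    exact h2
  · push_neg at hbr
    have hsa : swp hreg w u x a = a := swp_fix hreg (Or.inr hbr)
    by_cases hb1 : T.dist a w = 1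
    · have hbw : b = w := hc.dist_eq_zero_iff.1 (by omega)
      rw [hsa, hbw, swp_root hreg]
      rwa [hbw] at hadj
    · have hbw : b ≠ w := by
        intro h
        rw [h, hww] at hd
        omega
      have hbrb : branch T w b = branch T w a := by
        rw [← hpar]
        exact branch_parent hc (by omega)
      have hsb : swp hreg w u x b = b :=
        swp_fix hreg (Or.inr (by rw [hbrb]; exact hbr))
      rw [hsa, hsb]
      exact hadj

lemma swp_adj (hT : T.IsTree) {w u x : V} (hu : T.Adj w u) (hx : T.Adj w x)
    (hux : u ≠ x) (a b : V) (hadj : T.Adj a b) :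
    T.Adj (swp hreg w u x a) (swp hreg w u x b) := by
  rcases adj_dist_cases hT hadj w with hd | hd
  · exact swp_adj_par hreg hT hu hx hux hadj hd
  · exact (swp_adj_par hreg hT hu hx hux hadj.symm hd).symm

lemma swp_adj_iff (hT : T.IsTree) {w u x : V} (hu : T.Adj w u) (hx : T.Adj w x)
    (hux : u ≠ x) (a b : V) :
    T.Adj (swp hreg w u x a) (swp hreg w u x b) ↔ T.Adj a b := by
  constructor
  · intro h
    have h2 := swp_adj hreg hT hu hx hux _ _ h
    rwa [swp_invol hreg hT hu hx hux a, swp_invol hreg hT hu hx hux b] at h2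
  · exact swp_adj hreg hT hu hx hux a b

end equivs

lemma exists_nbr_avoid (huncount : ∀ v : V, ¬ (T.neighborSet v).Countable)
    (w : V) (C : Set V) (hC : C.Countable) : ∃ y, y ∈ T.neighborSet w ∧ y ∉ C := by
  by_contra h
  push_neg at h
  exact huncount w (hC.mono h)

lemma exists_dist_eq (hT : T.IsTree)
    (huncount : ∀ v : V, ¬ (T.neighborSet v).Countable) (v : V) (n : ℕ) :
    ∃ z, T.dist v z = n := by
  have hc := hT.isConnected
  induction n with
  | zero => exact ⟨v, by simp⟩
  | succ n ih =>
    obtain ⟨z, hz⟩ := ih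
    obtain ⟨y, hy, hyp⟩ := exists_nbr_avoid huncount z {parent T v z}
      (Set.countable_singleton _)
    have hadj : T.Adj z y := hy
    rcases adj_dist_cases hT hadj v with hd | hd
    · exfalso
      have := parent_eq hT hadj hd
      exact hyp (by rw [← this]; exact rfl)
    · refine ⟨y, ?_⟩
      have e1 : T.dist v y = T.dist y v := SimpleGraph.dist_comm
      have e2 : T.dist v z = T.dist z v := SimpleGraph.dist_comm
      omega

section restricted

variable (σ : Equiv.Perm V) (u w : V)

def restr (T : SimpleGraph V) (σ : Equiv.Perm V) (u w : V) : V → V :=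
  fun z => if T.dist z u < T.dist z w then σ z else z

lemma perm_fix_D (hc : T.Connected) (hσ : ∀ a b, T.Adj (σ a) (σ b) ↔ T.Adj a b)
    (hu : σ u = u) (hw : σ w = w) (z : V) :
    (T.dist (σ z) u < T.dist (σ z) w ↔ T.dist z u < T.dist z w) := by
  have h1 : T.dist (σ z) u = T.dist z u := by
    have := dist_perm hc σ hσ z u
    rwa [hu] at this
  have h2 : T.dist (σ z) w = T.dist z w := by
    have := dist_perm hc σ hσ z w
    rwa [hw] at this
  rw [h1, h2]

lemma perm_inv_props (hσ : ∀ a b, T.Adj (σ a) (σ b) ↔ T.Adj a b)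
    (hu : σ u = u) (hw : σ w = w) :
    (∀ a b, T.Adj (σ⁻¹ a) (σ⁻¹ b) ↔ T.Adj a b) ∧ σ⁻¹ u = u ∧ σ⁻¹ w = w := by
  refine ⟨?_, ?_, ?_⟩
  · intro a b
    conv_rhs => rw [← σ.apply_symm_apply a, ← σ.apply_symm_apply b]
    exact (hσ _ _).symm
  · conv_lhs => rw [← hu]
    simp
  · conv_lhs => rw [← hw]
    simp

lemma restr_comp (hc : T.Connected) (hσ : ∀ a b, T.Adj (σ a) (σ b) ↔ T.Adj a b)
    (hu : σ u = u) (hw : σ w = w) (z : V) :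
    restr T σ⁻¹ u w (restr T σ u w z) = z := by
  simp only [restr]
  by_cases hz : T.dist z u < T.dist z w
  · simp only [if_pos hz]
    rw [if_pos ((perm_fix_D σ u w hc hσ hu hw z).2 hz)]
    simp
  · simp [hz]

def restrPerm (hc : T.Connected) (hσ : ∀ a b, T.Adj (σ a) (σ b) ↔ T.Adj a b)
    (hu : σ u = u) (hw : σ w = w) : Equiv.Perm V where
  toFun := restr T σ u w
  invFun := restr T σ⁻¹ u w
  left_inv := restr_comp σ u w hc hσ hu hw
  right_inv := by
    obtain ⟨hσ', hu', hw'⟩ := perm_inv_props σ u w hσ hu hw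
    have := restr_comp σ⁻¹ u w hc hσ' hu' hw'
    intro z; simpa using this z

lemma cross_edge (hT : T.IsTree) {u w : V} (hadj_uw : T.Adj u w) {a b : V}
    (ha : T.dist a u < T.dist a w) (hb : ¬ T.dist b u < T.dist b w)
    (hadj : T.Adj a b) : a = u ∧ b = w := by
  have hwu : T.Adj w u := hadj_uw.symm
  obtain ⟨haw, hbra⟩ := (mem_D_iff hT hwu a).1 ha
  by_cases hbw : b = w
  · refine ⟨?_, hbw⟩
    rw [hbw] at hadj
    have hd1 : T.dist a w = 1 := SimpleGraph.dist_eq_one_iff_adj.2 hadj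
    rw [← hbra, branch_of_dist_one hd1]
  · exfalso
    have hbrb : branch T w b = branch T w a := branch_eq_of_adj hT hadj.symm hbw haw
    exact hb ((mem_D_iff hT hwu b).2 ⟨hbw, by rw [hbrb]; exact hbra⟩)

lemma restr_adj (hT : T.IsTree) {u w : V} (hadj_uw : T.Adj u w) {σ : Equiv.Perm V}
    (hσ : ∀ a b, T.Adj (σ a) (σ b) ↔ T.Adj a b)
    (hu : σ u = u) (hw : σ w = w) (a b : V) (hadj : T.Adj a b) :
    T.Adj (restr T σ u w a) (restr T σ u w b) := by
  simp only [restr]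
  by_cases ha : T.dist a u < T.dist a w <;> by_cases hb : T.dist b u < T.dist b w
  · rw [if_pos ha, if_pos hb]
    exact (hσ a b).2 hadj
  · obtain ⟨hau, hbw⟩ := cross_edge hT hadj_uw ha hb hadj
    rw [if_pos ha, if_neg hb, hau, hbw, hu]
    exact hadj_uw
  · obtain ⟨hbu, haw⟩ := cross_edge hT hadj_uw hb ha hadj.symm
    rw [if_neg ha, if_pos hb, hbu, haw, hu]
    exact hadj_uw.symm
  · rw [if_neg ha, if_neg hb]
    exact hadj

lemma restr_adj_iff (hT : T.IsTree) {u w : V} (hadj_uw : T.Adj u w) {σ : Equiv.Perm V}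
    (hσ : ∀ a b, T.Adj (σ a) (σ b) ↔ T.Adj a b) (hu : σ u = u) (hw : σ w = w) (a b : V) :
    T.Adj (restr T σ u w a) (restr T σ u w b) ↔ T.Adj a b := by
  constructor
  · intro h
    obtain ⟨hσ', hu', hw'⟩ := perm_inv_props σ u w hσ hu hw
    have h2 := restr_adj hT hadj_uw hσ' hu' hw' _ _ h
    rwa [restr_comp σ u w hT.isConnected hσ hu hw a,
      restr_comp σ u w hT.isConnected hσ hu hw b] at h2
  · exact restr_adj hT hadj_uw hσ hu hw a b

lemma restrPerm_apply (hc : T.Connected) (hσ : ∀ a b, T.Adj (σ a) (σ b) ↔ T.Adj a b)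
    (hu : σ u = u) (hw : σ w = w) :
    ⇑(restrPerm σ u w hc hσ hu hw) = restr T σ u w := rfl

lemma restrPerm_inv_apply (hc : T.Connected) (hσ : ∀ a b, T.Adj (σ a) (σ b) ↔ T.Adj a b)
    (hu : σ u = u) (hw : σ w = w) :
    ⇑(restrPerm σ u w hc hσ hu hw)⁻¹ = restr T σ⁻¹ u w := rfl

end restricted

end

end ATaux

/-- The subgroup `Aut⁺(T)` of the permutation group of the vertices of a graph
`T`: the subgroup generated by the graph automorphisms fixing (the endpoints
of) some edge. -/
def AutPlus {V : Type*} (T : SimpleGraph V) : Subgroup (Equiv.Perm V) :=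
  Subgroup.closure {σ : Equiv.Perm V |
    (∀ u v : V, T.Adj (σ u) (σ v) ↔ T.Adj u v) ∧
    ∃ u v : V, T.Adj u v ∧ σ u = u ∧ σ v = v}

/-- Let `T` be a regular tree in which every vertex has uncountably many
neighbours, and `G = Aut⁺(T)` with the topology of pointwise convergence on
vertices. Then every continuous homomorphism from `G` to a metrisable
topological group is trivial, while `G` has unbounded orbits on the vertex set
with its path metric. -/
theorem autPlus_tree_no_metrizable_quotient_but_unbounded_orbits
    {V : Type*} (T : SimpleGraph V) (hT : T.IsTree)
    (hreg : ∀ u v : V, Nonempty (T.neighborSet u ≃ T.neighborSet v))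
    (huncount : ∀ v : V, ¬ (T.neighborSet v).Countable)
    (H : Type*) [Group H] [TopologicalSpace H] [IsTopologicalGroup H]
    [TopologicalSpace.MetrizableSpace H] :
    letI : TopologicalSpace (Equiv.Perm V) :=
      TopologicalSpace.induced (fun σ : Equiv.Perm V => (σ : V → V))
        (@Pi.topologicalSpace V (fun _ => V) (fun _ => ⊥))
    (∀ φ : AutPlus T →* H, Continuous φ → ∀ g, φ g = 1) ∧
    (∀ v : V, ∀ n : ℕ, ∃ g ∈ AutPlus T, n < T.dist v (g v)) := by
  classical
  have hc := hT.isConnected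
  constructor
  · intro φ hφ g
    letI : TopologicalSpace V := ⊥
    letI : TopologicalSpace (Equiv.Perm V) :=
      TopologicalSpace.induced (fun σ : Equiv.Perm V => (σ : V → V))
        (@Pi.topologicalSpace V (fun _ => V) (fun _ => ⊥))
    letI : MetricSpace H := TopologicalSpace.metrizableSpaceMetric H
    have hGn : ∀ n : ℕ, ∃ F : Set V, F.Finite ∧
        ∀ h : AutPlus T, (∀ v ∈ F, (h.1 : Equiv.Perm V) v = v) →
          dist (φ h) 1 < 1 / (n + 1 : ℝ) := by
      intro n
      have hball : Metric.ball (1 : H) (1 / (n + 1 : ℝ)) ∈ nhds (1 : H) :=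
        Metric.ball_mem_nhds _ (by positivity)
      have hpre : φ ⁻¹' (Metric.ball (1 : H) (1 / (n + 1 : ℝ))) ∈ nhds (1 : AutPlus T) :=
        (hφ.continuousAt).preimage_mem_nhds (by rw [map_one]; exact hball)
      rw [nhds_subtype] at hpre
      obtain ⟨t, ht, hsub⟩ := Filter.mem_comap.1 hpre
      rw [OneMemClass.coe_one, nhds_induced, nhds_pi] at ht
      obtain ⟨t2, ht2, hsub2⟩ := Filter.mem_comap.1 ht
      obtain ⟨I, hIfin, s, hs, hIpi⟩ := Filter.mem_pi.1 ht2
      refine ⟨I, hIfin, ?_⟩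
      intro h hfix
      have hmem : ⇑(h.1 : Equiv.Perm V) ∈ I.pi s := by
        intro v hv
        rw [hfix v hv]
        simpa using mem_of_mem_nhds (hs v)
      have h2 : (h.1 : Equiv.Perm V) ∈ t := hsub2 (hIpi hmem)
      have h3 := hsub h2
      simpa [Metric.mem_ball] using h3
    choose F hFfin hFspec using hGn
    have hScount : (⋃ n, F n).Countable := Set.countable_iUnion (fun n => (hFfin n).countable)
    set S : Set V := ⋃ n, F n with hS_def
    have hker : ∀ h : AutPlus T, (∀ v ∈ S, (h.1 : Equiv.Perm V) v = v) → φ h = 1 := by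
      intro h hfix
      have hd : ∀ n : ℕ, dist (φ h) 1 < 1 / (n + 1 : ℝ) := fun n =>
        hFspec n h (fun v hv => hfix v (Set.mem_iUnion.2 ⟨n, hv⟩))
      have hle : dist (φ h) 1 ≤ 0 := by
        by_contra hpos
        push_neg at hpos
        obtain ⟨m, hm⟩ := exists_nat_one_div_lt hpos
        have := hd m
        linarith
      exact dist_le_zero.1 hle
    have key : ∀ u w : V, T.Adj u w → ∀ σ : Equiv.Perm V,
        (∀ a b, T.Adj (σ a) (σ b) ↔ T.Adj a b) → σ u = u → σ w = w →
        (∀ z, ¬ T.dist z u < T.dist z w → σ z = z) →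
        ∀ hmem : σ ∈ AutPlus T, φ ⟨σ, hmem⟩ = 1 := by
      intro u w hadj σ hσ hu hw hsupp hmem
      have hwu : T.Adj w u := hadj.symm
      obtain ⟨x, hxN, hxavoid⟩ := ATaux.exists_nbr_avoid (T := T) huncount w
        ((ATaux.branch T w '' S) ∪ {u}) ((hScount.image _).union (Set.countable_singleton u))
      have hxu : u ≠ x := fun h => hxavoid (Or.inr (by rw [h]; rfl))
      have hxw : T.Adj w x := hxN
      obtain ⟨y, hyN, hyavoid⟩ := ATaux.exists_nbr_avoid (T := T) huncount w
        ({u} ∪ {x}) ((Set.countable_singleton u).union (Set.countable_singleton x))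
      have hyadj : T.Adj w y := hyN
      have hyu : y ≠ u := fun h => hyavoid (Or.inl (by rw [h]; rfl))
      have hyx : y ≠ x := fun h => hyavoid (Or.inr (by rw [h]; rfl))
      have hinv : Function.Involutive (ATaux.swp hreg w u x) :=
        ATaux.swp_invol hreg hT hwu hxw hxu
      set c : Equiv.Perm V := hinv.toPerm _ with hc_def
      have hc_apply : ∀ z, c z = ATaux.swp hreg w u x z := fun z => rfl
      have hc_inv : ∀ z, c⁻¹ z = ATaux.swp hreg w u x z := fun z => rfl
      have hcadj : ∀ a b, T.Adj (c a) (c b) ↔ T.Adj a b :=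
        ATaux.swp_adj_iff hreg hT hwu hxw hxu
      have hcw : c w = w := ATaux.swp_root hreg
      have hcy : c y = y := by
        have hdy : T.dist y w = 1 := SimpleGraph.dist_eq_one_iff_adj.2 hyadj.symm
        have hby : ATaux.branch T w y = y := ATaux.branch_of_dist_one hdy
        exact ATaux.swp_fix hreg (Or.inr (by rw [hby]; exact ⟨hyu, hyx⟩))
      have hcmem : c ∈ AutPlus T :=
        Subgroup.subset_closure ⟨hcadj, w, y, hyadj, hcw, hcy⟩
      have hτmem : c * σ * c⁻¹ ∈ AutPlus T := mul_mem (mul_mem hcmem hmem) (inv_mem hcmem)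
      have hτfix : ∀ v ∈ S, ((⟨c * σ * c⁻¹, hτmem⟩ : AutPlus T).1 : Equiv.Perm V) v = v := by
        intro sS hsS
        have hsx : ATaux.branch T w sS ≠ x := fun h =>
          hxavoid (Or.inl ⟨sS, hsS, h⟩)
        show c (σ (c⁻¹ sS)) = sS
        by_cases hD : T.dist sS u < T.dist sS w
        · obtain ⟨hsw, hbs⟩ := (ATaux.mem_D_iff hT hwu sS).1 hD
          have hm := ATaux.swp_main hreg hT hwu hxw hxu (T.dist sS w) sS rfl
            (hc.pos_dist_of_ne hsw) (Or.inl hbs)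
          have h1 : σ (ATaux.swp hreg w u x sS) = ATaux.swp hreg w u x sS := by
            refine hsupp _ ?_
            intro hlt
            have h2 := (ATaux.mem_D_iff hT hwu _).1 hlt
            rw [hm.2.2.1 hbs] at h2
            exact hxu h2.2.symm
          rw [hc_inv, h1, hc_apply]
          exact hinv sS
        · by_cases hsw : sS = w
          · rw [hc_inv, hsw, ATaux.swp_root hreg, hw, hc_apply, ATaux.swp_root hreg]
          · have hbu : ATaux.branch T w sS ≠ u := fun h =>
              hD ((ATaux.mem_D_iff hT hwu sS).2 ⟨hsw, h⟩)
            have hfix : ATaux.swp hreg w u x sS = sS :=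
              ATaux.swp_fix hreg (Or.inr ⟨hbu, hsx⟩)
            rw [hc_inv, hfix, hsupp sS hD, hc_apply, hfix]
      have hφτ : φ ⟨c * σ * c⁻¹, hτmem⟩ = 1 := hker _ hτfix
      have hdecomp : (⟨σ, hmem⟩ : AutPlus T) =
          ⟨c, hcmem⟩⁻¹ * ⟨c * σ * c⁻¹, hτmem⟩ * ⟨c, hcmem⟩ := by
        refine Subtype.ext ?_
        show σ = c⁻¹ * (c * σ * c⁻¹) * c
        group
      rw [hdecomp, map_mul, map_mul, map_inv, hφτ, mul_one, inv_mul_cancel]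
    have hgen : ∀ σ : Equiv.Perm V,
        ((∀ a b : V, T.Adj (σ a) (σ b) ↔ T.Adj a b) ∧
          ∃ u v : V, T.Adj u v ∧ σ u = u ∧ σ v = v) →
        ∀ hmem : σ ∈ AutPlus T, φ ⟨σ, hmem⟩ = 1 := by
      rintro σ ⟨hσ, u, w, hadj, hu, hw⟩ hmem
      set σ₁ : Equiv.Perm V := ATaux.restrPerm σ u w hc hσ hu hw with hσ₁_def
      have hσ₁adj : ∀ a b, T.Adj (σ₁ a) (σ₁ b) ↔ T.Adj a b := fun a b =>
        ATaux.restr_adj_iff hT hadj hσ hu hw a b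
      have hd_uu : T.dist u u = 0 := by simp
      have hd_uw : T.dist u w = 1 := SimpleGraph.dist_eq_one_iff_adj.2 hadj
      have hd_wu : T.dist w u = 1 := SimpleGraph.dist_eq_one_iff_adj.2 hadj.symm
      have hd_ww : T.dist w w = 0 := by simp
      have hσ₁u : σ₁ u = u := by
        show ATaux.restr T σ u w u = u
        simp only [ATaux.restr]
        rw [if_pos (by omega)]
        exact hu
      have hσ₁w : σ₁ w = w := by
        show ATaux.restr T σ u w w = w
        simp only [ATaux.restr]
        rw [if_neg (by omega)]
      have hσ₁supp : ∀ z, ¬ T.dist z u < T.dist z w → σ₁ z = z := by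
        intro z hz
        show ATaux.restr T σ u w z = z
        simp only [ATaux.restr]
        rw [if_neg hz]
      have hσ₁mem : σ₁ ∈ AutPlus T :=
        Subgroup.subset_closure ⟨hσ₁adj, u, w, hadj, hσ₁u, hσ₁w⟩
      have hφσ₁ : φ ⟨σ₁, hσ₁mem⟩ = 1 := key u w hadj σ₁ hσ₁adj hσ₁u hσ₁w hσ₁supp hσ₁mem
      obtain ⟨hσ₁inv_adj, hσ₁inv_u, hσ₁inv_w⟩ :=
        ATaux.perm_inv_props σ₁ u w hσ₁adj hσ₁u hσ₁w
      have hσ₂adj : ∀ a b, T.Adj ((σ₁⁻¹ * σ) a) ((σ₁⁻¹ * σ) b) ↔ T.Adj a b := by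
        intro a b
        show T.Adj (σ₁⁻¹ (σ a)) (σ₁⁻¹ (σ b)) ↔ T.Adj a b
        rw [hσ₁inv_adj (σ a) (σ b)]
        exact hσ a b
      have hσ₂u : (σ₁⁻¹ * σ) u = u := by
        show σ₁⁻¹ (σ u) = u
        rw [hu, hσ₁inv_u]
      have hσ₂w : (σ₁⁻¹ * σ) w = w := by
        show σ₁⁻¹ (σ w) = w
        rw [hw, hσ₁inv_w]
      have hσ₂supp : ∀ z, ¬ T.dist z w < T.dist z u → (σ₁⁻¹ * σ) z = z := by
        intro z hz
        have hne : T.dist z u ≠ T.dist z w := by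
          have h1 := ATaux.adj_dist_ne hT hadj z
          have e1 : T.dist z u = T.dist u z := SimpleGraph.dist_comm
          have e2 : T.dist z w = T.dist w z := SimpleGraph.dist_comm
          omega
        have hzD : T.dist z u < T.dist z w := by omega
        have hσzD : T.dist (σ z) u < T.dist (σ z) w :=
          (ATaux.perm_fix_D σ u w hc hσ hu hw z).2 hzD
        show σ₁⁻¹ (σ z) = z
        have : σ₁⁻¹ (σ z) = ATaux.restr T σ⁻¹ u w (σ z) := rfl
        rw [this]
        simp only [ATaux.restr]
        rw [if_pos hσzD]
        simp
      have hσ₂mem : σ₁⁻¹ * σ ∈ AutPlus T :=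
        Subgroup.subset_closure ⟨hσ₂adj, w, u, hadj.symm, hσ₂w, hσ₂u⟩
      have hφσ₂ : φ ⟨σ₁⁻¹ * σ, hσ₂mem⟩ = 1 :=
        key w u hadj.symm _ hσ₂adj hσ₂w hσ₂u hσ₂supp hσ₂mem
      have hdecomp : (⟨σ, hmem⟩ : AutPlus T) = ⟨σ₁, hσ₁mem⟩ * ⟨σ₁⁻¹ * σ, hσ₂mem⟩ := by
        refine Subtype.ext ?_
        show σ = σ₁ * (σ₁⁻¹ * σ)
        group
      rw [hdecomp, map_mul, hφσ₁, hφσ₂, one_mul]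
    have hmain : ∀ (x : Equiv.Perm V) (hx : x ∈ AutPlus T), φ ⟨x, hx⟩ = 1 := by
      intro x hx
      refine Subgroup.closure_induction
        (p := fun y hy => φ ⟨y, hy⟩ = 1) ?_ ?_ ?_ ?_ hx
      · intro z hz
        exact hgen z hz _
      · exact map_one φ
      · intro z y hz hy hpz hpy
        have : (⟨z * y, mul_mem hz hy⟩ : AutPlus T) = ⟨z, hz⟩ * ⟨y, hy⟩ := rfl
        rw [this, map_mul, hpz, hpy, one_mul]
      · intro z hz hpz
        have : (⟨z⁻¹, inv_mem hz⟩ : AutPlus T) = ⟨z, hz⟩⁻¹ := rfl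
        rw [this, map_inv, hpz, inv_one]
    exact hmain g.1 g.2
  · intro v n
    obtain ⟨r, hr⟩ := ATaux.exists_dist_eq hT huncount v (n + 1)
    have hvr : v ≠ r := by
      intro h
      rw [h, SimpleGraph.dist_self] at hr
      omega
    have hu₀ : T.Adj r (ATaux.branch T r v) := ATaux.branch_adj hc hvr
    obtain ⟨x₀, hx₀N, hx₀u⟩ := ATaux.exists_nbr_avoid (T := T) huncount r
      {ATaux.branch T r v} (Set.countable_singleton _)
    have hx₀adj : T.Adj r x₀ := hx₀N
    have hne : ATaux.branch T r v ≠ x₀ := fun h => hx₀u (by rw [← h]; rfl)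
    obtain ⟨y, hyN, hyav⟩ := ATaux.exists_nbr_avoid (T := T) huncount r
      ({ATaux.branch T r v} ∪ {x₀})
      ((Set.countable_singleton _).union (Set.countable_singleton _))
    have hyadj : T.Adj r y := hyN
    have hyu : y ≠ ATaux.branch T r v := fun h => hyav (Or.inl (by rw [h]; rfl))
    have hyx : y ≠ x₀ := fun h => hyav (Or.inr (by rw [h]; rfl))
    have hinv : Function.Involutive (ATaux.swp hreg r (ATaux.branch T r v) x₀) :=
      ATaux.swp_invol hreg hT hu₀ hx₀adj hne
    set g : Equiv.Perm V := hinv.toPerm _ with hg_def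
    have hgadj : ∀ a b, T.Adj (g a) (g b) ↔ T.Adj a b :=
      ATaux.swp_adj_iff hreg hT hu₀ hx₀adj hne
    have hgr : g r = r := ATaux.swp_root hreg
    have hgy : g y = y := by
      have hdy : T.dist y r = 1 := SimpleGraph.dist_eq_one_iff_adj.2 hyadj.symm
      have hby : ATaux.branch T r y = y := ATaux.branch_of_dist_one hdy
      exact ATaux.swp_fix hreg (Or.inr (by rw [hby]; exact ⟨hyu, hyx⟩))
    have hgmem : g ∈ AutPlus T :=
      Subgroup.subset_closure ⟨hgadj, r, y, hyadj, hgr, hgy⟩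
    refine ⟨g, hgmem, ?_⟩
    have hm := ATaux.swp_main hreg hT hu₀ hx₀adj hne (T.dist v r) v rfl
      (by omega) (Or.inl rfl)
    have hgv : g v = ATaux.swp hreg r (ATaux.branch T r v) x₀ v := rfl
    have hbrne : ATaux.branch T r v ≠ ATaux.branch T r (g v) := by
      rw [hgv, hm.2.2.1 rfl]
      exact hne
    have hgvr : g v ≠ r := by rw [hgv]; exact hm.1
    have hlow := ATaux.dist_add_of_branch_ne hT hvr hgvr hbrne
    have h1 : T.dist (g v) r = T.dist v r := by rw [hgv]; exact hm.2.1
    have h2 : T.dist r (g v) = T.dist (g v) r := SimpleGraph.dist_comm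
    omega
end
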